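/- arXiv:1506.00928 — 5 statements merged into one kernel-verified Lean document; each statement's English description precedes it below -/
import Mathlib

section
/- Let f = (1 2 ... k) be the full forward k-cycle in S(n) and let c be a product of disjoint cycles each of which is a forward (increasingly ordered from its minimum) subcycle of f, such that the supports of these cycles form a noncrossing partition of {1,...,k}. Then c lies on a geodesic from the identity e to f in the transposition word metric, i.e., d(e,c) + d(c,f) = d(e,f). -/
open Equiv

/-- Word metric on the symmetric group induced by the set of all transpositions:
`trdist a b` is the minimal number of transpositions whose product is `a⁻¹ * b`. -/
noncomputable def trdist {n : ℕ} (a b : Equiv.Perm (Fin n)) : ℕ :=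
  sInf {k | ∃ l : List (Equiv.Perm (Fin n)), l.length = k ∧ (∀ t ∈ l, t.IsSwap) ∧ l.prod = a⁻¹ * b}

/-- The set of midpoints of `a` and `b`. -/
noncomputable def midpts {n : ℕ} (a b : Equiv.Perm (Fin n)) : Set (Equiv.Perm (Fin n)) :=
  {m | trdist a m + trdist m b = trdist a b ∧ |(trdist a m : ℤ) - (trdist m b : ℤ)| ≤ 1}

/-- The forward cycle on a finite subset: cycles through its elements in increasing order. -/
def fwdCycle {n : ℕ} (s : Finset (Fin n)) : Equiv.Perm (Fin n) :=
  (s.sort (· ≤ ·)).formPerm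

/-- The increasing list of minima of the cycles (orbits, including fixed points) of `p`. -/
noncomputable def cycleMins {n : ℕ} (p : Equiv.Perm (Fin n)) : List (Fin n) :=
  Finset.sort
    (@Finset.filter _ (fun i => ∀ j, p.SameCycle i j → i ≤ j) (Classical.decPred _) Finset.univ)
    (· ≤ ·)

/-- The number of orbits (cycles, including fixed points) of `p` acting on `Fin n`. -/
noncomputable def cycleCount {n : ℕ} (p : Equiv.Perm (Fin n)) : ℕ :=
  (cycleMins p).length

/-- The ordered cycle type of `p`: the list of cycle (orbit) lengths of `p`,
ordered by increasing cycle minima. -/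
noncomputable def orderedCycleType {n : ℕ} (p : Equiv.Perm (Fin n)) : List ℕ :=
  (cycleMins p).map (fun i =>
    (@Finset.filter _ (fun j => p.SameCycle i j) (Classical.decPred _) Finset.univ).card)

/-- The canonical permutation with ordered cycle type `μ` (starting at offset `off`):
it cyclically permutes the first `μ₁` points in increasing order, then the next `μ₂` points,
and so on. -/
def canonPerm (n : ℕ) : List ℕ → ℕ → Equiv.Perm (Fin n)
  | [], _ => 1
  | m :: rest, off =>
      fwdCycle ((Finset.univ : Finset (Fin n)).filter (fun i => off ≤ i.val ∧ i.val < off + m)) *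
        canonPerm n rest (off + m)

/-- `u` conjugates `p` into `q` and maps the sequence of cycle minima of `p`
to that of `q`, entrywise in order. -/
noncomputable def IsConjugator {n : ℕ} (p q u : Equiv.Perm (Fin n)) : Prop :=
  u * p * u⁻¹ = q ∧ (cycleMins p).map u = cycleMins q

/-- A list of blocks is noncrossing: there are no `a < b < c < d` with `a, c` in one block
and `b, d` in a different block. -/
def NoncrossingList {n : ℕ} (L : List (Finset (Fin n))) : Prop :=
  ¬ ∃ a b c d : Fin n, a < b ∧ b < c ∧ c < d ∧
    ∃ s ∈ L, ∃ t ∈ L, s ≠ t ∧ a ∈ s ∧ c ∈ s ∧ b ∈ t ∧ d ∈ t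

/-- The set of all midpoints of pairs `(a, b) ∈ A × B`. -/
noncomputable def midSet {n : ℕ} (A B : Finset (Equiv.Perm (Fin n))) :
    Finset (Equiv.Perm (Fin n)) :=
  @Finset.filter _ (fun m => ∃ a ∈ A, ∃ b ∈ B, m ∈ midpts a b) (Classical.decPred _) Finset.univ

/-- The distance between two sets of permutations. -/
noncomputable def setDist {n : ℕ} (A B : Finset (Equiv.Perm (Fin n))) : ℕ :=
  sInf {k | ∃ a ∈ A, ∃ b ∈ B, trdist a b = k}

/-- The embedding of the hypercube `Z₂^N` into `S(n)` (for `2N ≤ n`) sending the `i`-th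
standard basis vector to the transposition of `2i` and `2i+1` (0-indexed). -/
def cubeMap (N n : ℕ) (h : 2 * N ≤ n) (x : Fin N → ZMod 2) : Equiv.Perm (Fin n) :=
  ((List.finRange N).map (fun i =>
    if x i = 1 then
      Equiv.swap (⟨2 * i.val, by have := i.isLt; omega⟩ : Fin n)
        ⟨2 * i.val + 1, by have := i.isLt; omega⟩
    else 1)).prod




section Helpers

open List

variable {α : Type*} [DecidableEq α]


theorem myFormPerm_concat : ∀ (l : List α) (hl : l ≠ []) (x : α),
    formPerm (l ++ [x]) = formPerm l * Equiv.swap (l.getLast hl) x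
  | [y], _, x => by simp [formPerm_cons_cons]
  | y :: z :: l, _, x => by
    have h2 : (z :: l) ≠ [] := by simp
    rw [cons_append, cons_append, formPerm_cons_cons, ← cons_append,
      myFormPerm_concat (z :: l) h2 x, formPerm_cons_cons, getLast_cons h2, mul_assoc]

theorem myFormPerm_append (w : List α) (hw : w ≠ []) : ∀ (v : List α) (hv : v ≠ [])
    (_ : (v ++ w).Nodup),
    formPerm (v ++ w) = formPerm w * formPerm v * Equiv.swap (w.getLast hw) (v.getLast hv)
  | [x], _, hnd => by
    have h1 : (x :: w).formPerm = ((x :: w).rotate 1).formPerm :=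
      (formPerm_rotate_one _ (by simpa using hnd)).symm
    simp only [singleton_append] at *
    rw [h1]
    have h2 : (x :: w).rotate 1 = w ++ [x] := by simp [rotate_cons_succ]
    rw [h2, myFormPerm_concat w hw x]
    simp
  | x :: y :: v, _, hnd => by
    have hnd' := hnd
    simp only [cons_append, nodup_cons, mem_append, mem_cons] at hnd'
    have hxw : x ∉ w := by tauto
    have hyw : y ∉ w := by tauto
    have hcomm : Equiv.swap x y * w.formPerm = w.formPerm * Equiv.swap x y := by
      have h1 : w.formPerm x = x := formPerm_apply_of_notMem hxw
      have h2 : w.formPerm y = y := formPerm_apply_of_notMem hyw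
      have h3 := Equiv.swap_apply_apply w.formPerm x y
      rw [h1, h2] at h3
      conv_lhs => rw [h3]
      group
    have h4 : (y :: v) ≠ [] := by simp
    have key : ((x :: y :: v) ++ w).formPerm = Equiv.swap x y * ((y :: v) ++ w).formPerm := by
      simp only [cons_append]
      rw [formPerm_cons_cons]
    rw [key, myFormPerm_append w hw (y :: v) h4 (by simpa using hnd.of_cons),
      formPerm_cons_cons, getLast_cons h4]
    calc Equiv.swap x y * (w.formPerm * (y :: v).formPerm *
          Equiv.swap (w.getLast hw) ((y :: v).getLast h4))
        = (Equiv.swap x y * w.formPerm) * ((y :: v).formPerm *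
          Equiv.swap (w.getLast hw) ((y :: v).getLast h4)) := by group
      _ = (w.formPerm * Equiv.swap x y) * ((y :: v).formPerm *
          Equiv.swap (w.getLast hw) ((y :: v).getLast h4)) := by rw [hcomm]
      _ = _ := by group

theorem fwdCycle_union {n : ℕ} (s t : Finset (Fin n)) (hs : s.Nonempty) (ht : t.Nonempty)
    (hgap : ∀ x ∈ s, (∀ y ∈ t, y < x) ∨ (∀ y ∈ t, x < y)) :
    ∃ a ∈ s, ∃ b ∈ t, fwdCycle (s ∪ t) = fwdCycle s * fwdCycle t * Equiv.swap a b := by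
  classical
  have hdisj : ∀ x, x ∈ s → x ∈ t → False := by
    intro x hxs hxt
    rcases hgap x hxs with h | h
    · exact absurd (h x hxt) (lt_irrefl x)
    · exact absurd (h x hxt) (lt_irrefl x)
  set P : Fin n → Prop := fun x => ∀ y ∈ t, x < y with hP
  set A : List (Fin n) := (s.filter P).sort (· ≤ ·) with hA
  set B : List (Fin n) := (s.filter (fun x => ¬ P x)).sort (· ≤ ·) with hB
  set v : List (Fin n) := t.sort (· ≤ ·) with hv
  have memA : ∀ x, x ∈ A ↔ x ∈ s ∧ P x := by
    intro x; rw [hA, Finset.mem_sort, Finset.mem_filter]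
  have memB : ∀ x, x ∈ B ↔ x ∈ s ∧ ¬ P x := by
    intro x; rw [hB, Finset.mem_sort, Finset.mem_filter]
  have memv : ∀ x, x ∈ v ↔ x ∈ t := by intro x; rw [hv, Finset.mem_sort]
  have hBlow : ∀ x ∈ B, ∀ y ∈ t, y < x := by
    intro x hx y hy
    rcases (memB x).1 hx with ⟨hxs, hnp⟩
    rcases hgap x hxs with h | h
    · exact h y hy
    · exact absurd h hnp
  have hABdisj : ∀ x ∈ A, x ∉ B := by
    intro x hx hx'
    exact ((memB x).1 hx').2 ((memA x).1 hx).2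
  have hAfavorable : ∀ x ∈ A, ∀ y ∈ t, x < y := fun x hx => ((memA x).1 hx).2
  -- s.sort = A ++ B
  have hsAB : s.sort (· ≤ ·) = A ++ B := by
    refine (fun hp hs => List.Perm.eq_of_pairwise' (Finset.pairwise_sort _ _) hs hp) ?_ ?_
    · refine (List.perm_ext_iff_of_nodup (Finset.sort_nodup _ _) ?_).2 ?_
      · exact List.nodup_append.2 ⟨Finset.sort_nodup _ _, Finset.sort_nodup _ _,
          fun x hx x' hx' hxx => hABdisj x hx (hxx ▸ hx')⟩
      · intro x
        simp only [Finset.mem_sort, List.mem_append, memA, memB]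
        by_cases hPx : P x <;> tauto
    · refine List.pairwise_append.2 ⟨Finset.pairwise_sort _ _, Finset.pairwise_sort _ _, ?_⟩
      intro x hx y hy
      obtain ⟨y0, hy0⟩ := ht
      exact le_of_lt (lt_trans (hAfavorable x hx y0 hy0) (hBlow y hy y0 hy0))
  have hstA : (s ∪ t).sort (· ≤ ·) = A ++ (v ++ B) := by
    refine (fun hp hs => List.Perm.eq_of_pairwise' (Finset.pairwise_sort _ _) hs hp) ?_ ?_
    · refine (List.perm_ext_iff_of_nodup (Finset.sort_nodup _ _) ?_).2 ?_
      · refine List.nodup_append.2 ⟨Finset.sort_nodup _ _, ?_, ?_⟩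
        · refine List.nodup_append.2 ⟨Finset.sort_nodup _ _, Finset.sort_nodup _ _, ?_⟩
          intro x hx x' hx' hxx; subst hxx
          exact hdisj x ((memB x).1 hx').1 ((memv x).1 hx)
        · intro x hx x' hx' hxx; subst hxx
          rcases List.mem_append.1 hx' with h | h
          · exact hdisj x ((memA x).1 hx).1 ((memv x).1 h)
          · exact hABdisj x hx h
      · intro x
        simp only [Finset.mem_sort, List.mem_append, memA, memB, memv, Finset.mem_union]
        by_cases hPx : P x <;> tauto
    · refine List.pairwise_append.2 ⟨Finset.pairwise_sort _ _, ?_, ?_⟩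
      · refine List.pairwise_append.2 ⟨Finset.pairwise_sort _ _, Finset.pairwise_sort _ _, ?_⟩
        intro x hx y hy
        exact le_of_lt (hBlow y hy x ((memv x).1 hx))
      · intro x hx y hy
        rcases List.mem_append.1 hy with h | h
        · exact le_of_lt (hAfavorable x hx y ((memv y).1 h))
        · obtain ⟨y0, hy0⟩ := ht
          exact le_of_lt (lt_trans (hAfavorable x hx y0 hy0) (hBlow y h y0 hy0))
  have hABne : A ++ B ≠ [] := by
    rw [← hsAB]
    intro h
    obtain ⟨x, hx⟩ := hs
    exact (List.mem_nil_iff x).1 (h ▸ (Finset.mem_sort (α := Fin n) (· ≤ ·)).2 hx)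
  have hBAne : B ++ A ≠ [] := by
    intro h
    rcases List.append_eq_nil_iff.1 h with ⟨h1, h2⟩
    exact hABne (by rw [h1, h2]; rfl)
  have hvne : v ≠ [] := by
    obtain ⟨x, hx⟩ := ht
    exact List.ne_nil_of_mem ((memv x).2 hx)
  have hndA : (A ++ (v ++ B)).Nodup := by rw [← hstA]; exact Finset.sort_nodup _ _
  have hndv : (v ++ (B ++ A)).Nodup := by
    refine List.nodup_append.2 ⟨Finset.sort_nodup _ _, ?_, ?_⟩
    · refine List.nodup_append.2 ⟨Finset.sort_nodup _ _, Finset.sort_nodup _ _, ?_⟩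
      exact fun x hx x' hx' hxx => hABdisj x' hx' (hxx ▸ hx)
    · intro x hx x' hx' hxx; subst hxx
      rcases List.mem_append.1 hx' with h | h
      · exact hdisj x ((memB x).1 h).1 ((memv x).1 hx)
      · exact hdisj x ((memA x).1 h).1 ((memv x).1 hx)
  have key := myFormPerm_append (B ++ A) hBAne v hvne hndv
  have hBAmem : (B ++ A).getLast hBAne ∈ s := by
    have hm := List.getLast_mem hBAne
    rcases List.mem_append.1 hm with h | h
    · exact ((memB _).1 h).1
    · exact ((memA _).1 h).1
  have hvmem : v.getLast hvne ∈ t := (memv _).1 (List.getLast_mem hvne)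
  refine ⟨(B ++ A).getLast hBAne, hBAmem, v.getLast hvne, hvmem, ?_⟩
  have hfs : formPerm (B ++ A) = fwdCycle s := by
    have hrot : (A ++ B).rotate A.length = B ++ A := List.rotate_append_length_eq _ _
    have hnd2 : (A ++ B).Nodup := by rw [← hsAB]; exact Finset.sort_nodup _ _
    rw [fwdCycle, hsAB, ← hrot]
    exact List.formPerm_rotate _ hnd2 _
  calc fwdCycle (s ∪ t) = formPerm (A ++ (v ++ B)) := by rw [fwdCycle, hstA]
    _ = formPerm ((A ++ (v ++ B)).rotate A.length) := (List.formPerm_rotate _ hndA _).symm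
    _ = formPerm (v ++ (B ++ A)) := by rw [List.rotate_append_length_eq, List.append_assoc]
    _ = formPerm (B ++ A) * formPerm v * Equiv.swap ((B ++ A).getLast hBAne) (v.getLast hvne) :=
        key
    _ = fwdCycle s * fwdCycle t * Equiv.swap ((B ++ A).getLast hBAne) (v.getLast hvne) := by
        rw [hfs]; rfl

theorem fwdCycle_apply_of_not_mem {n : ℕ} {s : Finset (Fin n)} {x : Fin n} (h : x ∉ s) :
    fwdCycle s x = x :=
  List.formPerm_apply_of_notMem (by rwa [Finset.mem_sort])

theorem mem_foldr_union' {n : ℕ} (L : List (Finset (Fin n))) (x : Fin n) :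
    x ∈ L.foldr (· ∪ ·) ∅ ↔ ∃ s ∈ L, x ∈ s := by
  induction L with
  | nil => simp
  | cons s L ih => simp [ih]

theorem nodup_of_pairwise_disjoint {n : ℕ} {L : List (Finset (Fin n))}
    (hd : L.Pairwise _root_.Disjoint) (hne : ∀ s ∈ L, s.Nonempty) : L.Nodup := by
  refine hd.imp_of_mem ?_
  intro s t hs _ hst
  intro hEq
  obtain ⟨x, hx⟩ := hne s hs
  subst hEq
  exact (Finset.disjoint_left.1 hst) hx hx

theorem key_lemma {n : ℕ} (N : ℕ) : ∀ (L : List (Finset (Fin n))), L.length = N →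
    L.Pairwise _root_.Disjoint → (∀ s ∈ L, s.Nonempty) → NoncrossingList L → L ≠ [] →
    ∃ l : List (Equiv.Perm (Fin n)), l.length + 1 = L.length ∧
      (∀ τ ∈ l, τ.IsSwap) ∧ (∀ τ ∈ l, ∀ x : Fin n, τ x ≠ x → ∃ s ∈ L, x ∈ s) ∧
      (L.map fwdCycle).prod * l.prod = fwdCycle (L.foldr (· ∪ ·) ∅) := by
  induction N using Nat.strong_induction_on with
  | _ N ih =>
  intro L hlen hd hne hnc hLne
  classical
  set g : Finset (Fin n) → ℕ := fun s => if h : s.Nonempty then (s.min' h).val else 0 with hg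
  cases hargmax : L.argmax g with
  | none => exact absurd (List.argmax_eq_none.1 hargmax) hLne
  | some t =>
  have htmem : t ∈ L.argmax g := hargmax ▸ rfl
  have htL : t ∈ L := List.argmax_mem htmem
  have hNodup : L.Nodup := nodup_of_pairwise_disjoint hd hne
  have hperm : L ~ t :: L.erase t := List.perm_cons_erase htL
  set L' := L.erase t with hL'
  have hlenL' : L'.length + 1 = L.length := List.length_erase_add_one htL
  have hpairdisj : ∀ s ∈ L, ∀ s' ∈ L, s ≠ s' → _root_.Disjoint s s' := by
    intro s hs s' hs' hss'
    exact hd.forall hs hs' hss'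
  have ht_ne : t.Nonempty := hne t htL
  by_cases hL'e : L' = []
  · have hlone : L = [t] := by
      have h1 : L.length = 1 := by rw [← hlenL', hL'e]; rfl
      obtain ⟨a, ha⟩ := List.length_eq_one_iff.1 h1
      rw [ha] at htL
      simp at htL
      rw [ha, htL]
    refine ⟨[], by rw [hlone]; rfl, by simp, by simp, ?_⟩
    rw [hlone]
    simp [fwdCycle]
  · -- main case
    have hd' : L'.Pairwise _root_.Disjoint := hd.sublist List.erase_sublist
    have hne' : ∀ s ∈ L', s.Nonempty := fun s hs => hne s (List.mem_of_mem_erase hs)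
    have hnc' : NoncrossingList L' := by
      intro ⟨a, b, c, d, h1, h2, h3, s, hs, t', ht', h4⟩
      exact hnc ⟨a, b, c, d, h1, h2, h3, s, List.mem_of_mem_erase hs, t',
        List.mem_of_mem_erase ht', h4⟩
    obtain ⟨l', hl'len, hl'sw, hl'supp, hl'prod⟩ :=
      ih L'.length (by omega) L' rfl hd' hne' hnc' hL'e
    set u : Finset (Fin n) := L'.foldr (· ∪ ·) ∅ with hu
    have hmemu : ∀ x, x ∈ u ↔ ∃ s ∈ L', x ∈ s := fun x => mem_foldr_union' L' x
    have hu_ne : u.Nonempty := by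
      obtain ⟨s, hs⟩ := List.exists_mem_of_ne_nil L' hL'e
      obtain ⟨x, hx⟩ := hne' s hs
      exact ⟨x, (hmemu x).2 ⟨s, hs, hx⟩⟩
    have hL'mem : ∀ s ∈ L', s ≠ t ∧ s ∈ L := by
      intro s hs
      rw [hL', hNodup.mem_erase_iff] at hs
      exact hs
    have hgap : ∀ x ∈ u, (∀ y ∈ t, y < x) ∨ (∀ y ∈ t, x < y) := by
      intro x hx
      obtain ⟨s', hs'L', hxs'⟩ := (hmemu x).1 hx
      obtain ⟨hs'ne_t, hs'L⟩ := hL'mem s' hs'L'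
      have hdisj_st : _root_.Disjoint s' t := hpairdisj s' hs'L t htL hs'ne_t
      by_contra hcon
      push_neg at hcon
      obtain ⟨⟨y, hyt, hxy⟩, ⟨z, hzt, hzx⟩⟩ := hcon
      -- hxy : x ≤ y? from ¬ y < x; hzx : z ≤ x
      have hxny : x ≠ y := fun h => (Finset.disjoint_left.1 hdisj_st) hxs' (h ▸ hyt)
      have hxnz : x ≠ z := fun h => (Finset.disjoint_left.1 hdisj_st) hxs' (h ▸ hzt)
      have hxy' : x < y := lt_of_le_of_ne hxy hxny
      have hzx' : z < x := lt_of_le_of_ne hzx (Ne.symm hxnz)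
      have hs'ne : s'.Nonempty := hne s' hs'L
      set p := s'.min' hs'ne with hp
      have hps' : p ∈ s' := s'.min'_mem hs'ne
      have hglee : g s' ≤ g t := List.le_of_mem_argmax hs'L htmem
      have hpt : p < t.min' ht_ne := by
        have h1 : g s' = p.val := by rw [hg]; simp [hs'ne, hp]
        have h2 : g t = (t.min' ht_ne).val := by rw [hg]; simp [ht_ne]
        have hne_pt : p ≠ t.min' ht_ne :=
          fun h => (Finset.disjoint_left.1 hdisj_st) hps' (h ▸ t.min'_mem ht_ne)
        have h3 : p.val ≤ (t.min' ht_ne).val := by rw [← h1, ← h2]; exact hglee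
        have h4 : p.val ≠ (t.min' ht_ne).val := fun h => hne_pt (Fin.val_injective h)
        rw [Fin.lt_def]
        omega
      have hpz : p < z := lt_of_lt_of_le hpt (t.min'_le z hzt)
      exact hnc ⟨p, z, x, y, hpz, hzx', hxy', s', hs'L, t, htL, hs'ne_t, hps', hxs', hzt, hyt⟩
    obtain ⟨a, hau, b, hbt, hmerge⟩ := fwdCycle_union u t hu_ne ht_ne hgap
    have hxu_not_t : ∀ x ∈ u, x ∉ t := by
      intro x hx
      obtain ⟨s', hs'L', hxs'⟩ := (hmemu x).1 hx
      obtain ⟨hs'ne_t, hs'L⟩ := hL'mem s' hs'L'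
      exact Finset.disjoint_left.1 (hpairdisj s' hs'L t htL hs'ne_t) hxs'
    have hab : a ≠ b := fun h => hxu_not_t a hau (h ▸ hbt)
    refine ⟨l' ++ [Equiv.swap a b], ?_, ?_, ?_, ?_⟩
    · simp only [List.length_append, List.length_singleton]
      omega
    · intro τ hτ
      rcases List.mem_append.1 hτ with h | h
      · exact hl'sw τ h
      · rw [List.mem_singleton.1 h]
        exact ⟨a, b, hab, rfl⟩
    · intro τ hτ x hx
      rcases List.mem_append.1 hτ with h | h
      · obtain ⟨s, hs, hxs⟩ := hl'supp τ h x hx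
        exact ⟨s, (hL'mem s hs).2, hxs⟩
      · rw [List.mem_singleton.1 h] at hx
        rcases (Equiv.swap_apply_ne_self_iff.1 hx).2 with rfl | rfl
        · obtain ⟨s, hs, hxs⟩ := (hmemu x).1 hau
          exact ⟨s, (hL'mem s hs).2, hxs⟩
        · exact ⟨t, htL, hbt⟩
    · -- product identity
      have hdisj_perm : ∀ σ : Equiv.Perm (Fin n),
          (∀ x : Fin n, σ x ≠ x → x ∈ u) → Commute (fwdCycle t) σ := by
        intro σ hσ
        apply Equiv.Perm.Disjoint.commute
        intro x
        by_cases hx : σ x = x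
        · exact Or.inr hx
        · exact Or.inl (fwdCycle_apply_of_not_mem (hxu_not_t x (hσ x hx)))
      have hcomm1 : Commute (fwdCycle t) l'.prod := by
        apply Commute.list_prod_right
        intro τ hτ
        apply hdisj_perm
        intro x hx
        obtain ⟨s, hs, hxs⟩ := hl'supp τ hτ x hx
        exact (hmemu x).2 ⟨s, hs, hxs⟩
      have hcomm2 : Commute (fwdCycle t) (fwdCycle u) := by
        apply hdisj_perm
        intro x hx
        by_contra hxu
        exact hx (fwdCycle_apply_of_not_mem hxu)
      have hprodL : (L.map fwdCycle).prod = fwdCycle t * (L'.map fwdCycle).prod := by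
        have h2 : L.map fwdCycle ~ (t :: L').map fwdCycle := hperm.map _
        have hpairC : (L.map fwdCycle).Pairwise Commute := by
          rw [List.pairwise_map]
          refine hd.imp_of_mem ?_
          intro s s' hs hs' hss'
          apply Equiv.Perm.Disjoint.commute
          intro x
          by_cases hx : x ∈ s
          · exact Or.inr (fwdCycle_apply_of_not_mem (Finset.disjoint_left.1 hss' hx))
          · exact Or.inl (fwdCycle_apply_of_not_mem hx)
        rw [h2.prod_eq' hpairC, List.map_cons, List.prod_cons]
      have hunion : L.foldr (· ∪ ·) ∅ = u ∪ t := by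
        ext x
        rw [mem_foldr_union', Finset.mem_union, hmemu]
        constructor
        · rintro ⟨s, hs, hxs⟩
          by_cases hst : s = t
          · exact Or.inr (hst ▸ hxs)
          · exact Or.inl ⟨s, (hNodup.mem_erase_iff.2 ⟨hst, hs⟩ : s ∈ L'), hxs⟩
        · rintro (⟨s, hs, hxs⟩ | hxt)
          · exact ⟨s, (hL'mem s hs).2, hxs⟩
          · exact ⟨t, htL, hxt⟩
      rw [hunion, hmerge, List.prod_append, List.prod_singleton, hprodL]
      calc fwdCycle t * (L'.map fwdCycle).prod * (l'.prod * Equiv.swap a b)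
          = fwdCycle t * ((L'.map fwdCycle).prod * l'.prod) * Equiv.swap a b := by group
        _ = fwdCycle t * fwdCycle u * Equiv.swap a b := by rw [hl'prod]
        _ = fwdCycle u * fwdCycle t * Equiv.swap a b := by rw [hcomm2.eq]

theorem trdist_set_nonempty {n : ℕ} (a b : Equiv.Perm (Fin n)) :
    {k | ∃ l : List (Equiv.Perm (Fin n)), l.length = k ∧ (∀ t ∈ l, t.IsSwap) ∧
      l.prod = a⁻¹ * b}.Nonempty := by
  obtain ⟨l, hprod, hsw⟩ := (Equiv.Perm.truncSwapFactors (a⁻¹ * b)).out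
  exact ⟨l.length, l, rfl, hsw, hprod⟩

theorem trdist_le {n : ℕ} {a b : Equiv.Perm (Fin n)} (l : List (Equiv.Perm (Fin n)))
    (hsw : ∀ t ∈ l, t.IsSwap) (hprod : l.prod = a⁻¹ * b) : trdist a b ≤ l.length :=
  Nat.sInf_le ⟨l, rfl, hsw, hprod⟩

theorem trdist_spec {n : ℕ} (a b : Equiv.Perm (Fin n)) :
    ∃ l : List (Equiv.Perm (Fin n)), l.length = trdist a b ∧ (∀ t ∈ l, t.IsSwap) ∧
      l.prod = a⁻¹ * b :=
  Nat.sInf_mem (trdist_set_nonempty a b)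

theorem trdist_triangle {n : ℕ} (a m b : Equiv.Perm (Fin n)) :
    trdist a b ≤ trdist a m + trdist m b := by
  obtain ⟨l1, h1, hs1, hp1⟩ := trdist_spec a m
  obtain ⟨l2, h2, hs2, hp2⟩ := trdist_spec m b
  have : (l1 ++ l2).prod = a⁻¹ * b := by
    rw [List.prod_append, hp1, hp2]
    group
  have hle := trdist_le (l1 ++ l2) (by
    intro t ht
    rcases List.mem_append.1 ht with h | h
    · exact hs1 t h
    · exact hs2 t h) this
  rwa [List.length_append, h1, h2] at hle

theorem exists_swaps_formPerm {α : Type*} [DecidableEq α] :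
    ∀ (l : List α), l.Nodup → ∃ w : List (Equiv.Perm α), w.length = l.length - 1 ∧
      (∀ τ ∈ w, τ.IsSwap) ∧ w.prod = l.formPerm
  | [], _ => ⟨[], rfl, by simp, by simp [List.formPerm]⟩
  | [x], _ => ⟨[], rfl, by simp, by simp⟩
  | x :: y :: l, hnd => by
    obtain ⟨w, hlen, hsw, hprod⟩ := exists_swaps_formPerm (y :: l) hnd.of_cons
    refine ⟨Equiv.swap x y :: w, by simp at hlen ⊢; omega, ?_, ?_⟩
    · intro τ hτ
      rcases List.mem_cons.1 hτ with h | h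
      · exact h ▸ ⟨x, y, by simp at hnd; tauto, rfl⟩
      · exact hsw τ h
    · rw [List.prod_cons, hprod, List.formPerm_cons_cons]

theorem exists_swaps_blocks {n : ℕ} :
    ∀ (L : List (Finset (Fin n))), (∀ s ∈ L, s.Nonempty) →
    ∃ w : List (Equiv.Perm (Fin n)), w.length + L.length = (L.map Finset.card).sum ∧
      (∀ τ ∈ w, τ.IsSwap) ∧ w.prod = (L.map fwdCycle).prod
  | [], _ => ⟨[], by simp, by simp, by simp⟩
  | s :: L, hne => by
    obtain ⟨w, hlen, hsw, hprod⟩ := exists_swaps_blocks L (fun t ht => hne t (by simp [ht]))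
    obtain ⟨ws, hwslen, hwssw, hwsprod⟩ := exists_swaps_formPerm (s.sort (· ≤ ·))
      (Finset.sort_nodup _ _)
    have hcard : (s.sort (· ≤ ·)).length = s.card := Finset.length_sort _
    have hspos : 1 ≤ s.card := Finset.card_pos.2 (hne s (by simp))
    refine ⟨ws ++ w, ?_, ?_, ?_⟩
    · simp only [List.length_append, List.map_cons, List.sum_cons, List.length_cons]
      rw [hwslen, hcard]
      omega
    · intro τ hτ
      rcases List.mem_append.1 hτ with h | h
      · exact hwssw τ h
      · exact hsw τ h
    · rw [List.prod_append, hwsprod, List.map_cons, List.prod_cons, hprod]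
      rfl

theorem card_foldr_union {n : ℕ} :
    ∀ (L : List (Finset (Fin n))), L.Pairwise _root_.Disjoint →
      (L.foldr (· ∪ ·) ∅).card = (L.map Finset.card).sum
  | [], _ => by simp
  | s :: L, hd => by
    have hdisj : _root_.Disjoint s (L.foldr (· ∪ ·) ∅) := by
      rw [Finset.disjoint_left]
      intro x hxs hxu
      obtain ⟨t, htL, hxt⟩ := (mem_foldr_union' L x).1 hxu
      exact Finset.disjoint_left.1 ((List.pairwise_cons.1 hd).1 t htL) hxs hxt
    simp only [List.foldr_cons, List.map_cons, List.sum_cons]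
    rw [Finset.card_union_of_disjoint hdisj, card_foldr_union L (List.pairwise_cons.1 hd).2]

theorem card_filter_lt {n k : ℕ} (hk : k ≤ n) :
    ((Finset.univ : Finset (Fin n)).filter (fun i => i.val < k)).card = k := by
  have : (Finset.univ : Finset (Fin n)).filter (fun i => i.val < k) =
      Finset.map ⟨Fin.castLE hk, Fin.castLE_injective hk⟩ Finset.univ := by
    ext x
    simp only [Finset.mem_filter, Finset.mem_univ, true_and, Finset.mem_map,
      Function.Embedding.coeFn_mk]
    constructor
    · intro h
      exact ⟨⟨x.val, h⟩, rfl⟩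
    · rintro ⟨j, rfl⟩
      exact j.isLt
  rw [this, Finset.card_map, Finset.card_univ, Fintype.card_fin]

theorem mem_filter' {α : Type*} (p : α → Prop) (s : Finset α) (x : α) :
    x ∈ @Finset.filter α p (Classical.decPred p) s ↔ x ∈ s ∧ p x :=
  @Finset.mem_filter _ _ (Classical.decPred p) _ _

theorem cycleCount_eq_card {n : ℕ} (p : Equiv.Perm (Fin n)) :
    cycleCount p = (@Finset.filter _ (fun i => ∀ j, p.SameCycle i j → i ≤ j)
      (Classical.decPred _) Finset.univ).card :=
  Finset.length_sort _

theorem cycleCount_one {n : ℕ} : cycleCount (1 : Equiv.Perm (Fin n)) = n := by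
  rw [cycleCount_eq_card]
  have h : (@Finset.filter _ (fun i => ∀ j, (1 : Equiv.Perm (Fin n)).SameCycle i j → i ≤ j)
      (Classical.decPred _) Finset.univ) = Finset.univ := by
    ext i
    rw [mem_filter']
    simp only [Finset.mem_univ, true_and, iff_true]
    intro j hj
    rw [Equiv.Perm.sameCycle_one] at hj
    exact le_of_eq hj
  rw [h, Finset.card_univ, Fintype.card_fin]

theorem cycleCount_swap_mul {n : ℕ} (a b : Fin n) (σ : Equiv.Perm (Fin n)) :
    cycleCount σ ≤ cycleCount (Equiv.swap a b * σ) + 1 := by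
  classical
  set τ := Equiv.swap a b * σ with hτ
  set J : Fin n → Fin n → Prop := fun x y => σ.SameCycle x y ∨
    (σ.SameCycle x a ∧ σ.SameCycle b y) ∨ (σ.SameCycle x b ∧ σ.SameCycle a y) with hJ
  have Jrefl : ∀ x, J x x := fun x => Or.inl (Equiv.Perm.SameCycle.refl σ x)
  have Jsymm : ∀ {x y}, J x y → J y x := by
    rintro x y (h | ⟨h1, h2⟩ | ⟨h1, h2⟩)
    · exact Or.inl h.symm
    · exact Or.inr (Or.inr ⟨h2.symm, h1.symm⟩)
    · exact Or.inr (Or.inl ⟨h2.symm, h1.symm⟩)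
  have Jtrans : ∀ {x y z}, J x y → J y z → J x z := by
    rintro x y z (h | ⟨h1, h2⟩ | ⟨h1, h2⟩) (h' | ⟨h1', h2'⟩ | ⟨h1', h2'⟩)
    · exact Or.inl (h.trans h')
    · exact Or.inr (Or.inl ⟨h.trans h1', h2'⟩)
    · exact Or.inr (Or.inr ⟨h.trans h1', h2'⟩)
    · exact Or.inr (Or.inl ⟨h1, h2.trans h'⟩)
    · exact Or.inl (h1.trans ((h2.trans h1').symm.trans h2'))
    · exact Or.inl (h1.trans h2')
    · exact Or.inr (Or.inr ⟨h1, h2.trans h'⟩)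
    · exact Or.inl (h1.trans h2')
    · exact Or.inl (h1.trans (h1'.symm.trans (h2.symm.trans h2')))
  have Jstep : ∀ z, J z (τ z) := by
    intro z
    have hz : σ.SameCycle z (σ z) := (Equiv.Perm.sameCycle_apply_right).2 Equiv.Perm.SameCycle.rfl
    by_cases h1 : σ z = a
    · have he : τ z = b := by rw [hτ, Equiv.Perm.mul_apply, h1, Equiv.swap_apply_left]
      rw [he]
      exact Or.inr (Or.inl ⟨h1 ▸ hz, Equiv.Perm.SameCycle.rfl⟩)
    · by_cases h2 : σ z = b
      · have he : τ z = a := by rw [hτ, Equiv.Perm.mul_apply, h2, Equiv.swap_apply_right]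
        rw [he]
        exact Or.inr (Or.inr ⟨h2 ▸ hz, Equiv.Perm.SameCycle.rfl⟩)
      · have he : τ z = σ z := by
          rw [hτ, Equiv.Perm.mul_apply, Equiv.swap_apply_of_ne_of_ne h1 h2]
        rw [he]
        exact Or.inl hz
  have Jstep' : ∀ z, J z (τ⁻¹ z) := by
    intro z
    have h := Jstep (τ⁻¹ z)
    rw [show τ (τ⁻¹ z) = z by simp] at h
    exact Jsymm h
  have hJcyc : ∀ x y, τ.SameCycle x y → J x y := by
    rintro x y ⟨i, rfl⟩
    induction i using Int.induction_on with
    | zero => simpa using Jrefl x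
    | succ i ihp =>
      have h1 : (τ ^ ((i : ℤ) + 1)) x = τ ((τ ^ (i : ℤ)) x) := by
        rw [add_comm, zpow_add, zpow_one, Equiv.Perm.mul_apply]
      rw [h1]
      exact Jtrans ihp (Jstep _)
    | pred i ihn =>
      have h1 : (τ ^ (-(i : ℤ) - 1)) x = τ⁻¹ ((τ ^ (-(i : ℤ))) x) := by
        rw [sub_eq_add_neg, add_comm, zpow_add, Equiv.Perm.mul_apply, zpow_neg, zpow_one]
      rw [h1]
      exact Jtrans ihn (Jstep' _)
  -- the min map
  set cls : Fin n → Finset (Fin n) :=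
    fun i => @Finset.filter _ (fun j => τ.SameCycle i j) (Classical.decPred _) Finset.univ
    with hcls
  have hclsne : ∀ i, (cls i).Nonempty :=
    fun i => ⟨i, (mem_filter' _ _ _).2 ⟨Finset.mem_univ _, Equiv.Perm.SameCycle.rfl⟩⟩
  set m : Fin n → Fin n := fun i => (cls i).min' (hclsne i) with hm
  have m_same : ∀ i, τ.SameCycle i (m i) :=
    fun i => ((mem_filter' (fun j => τ.SameCycle i j) Finset.univ (m i)).1
      ((cls i).min'_mem (hclsne i))).2
  have m_min : ∀ i j, τ.SameCycle (m i) j → m i ≤ j := by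
    intro i j hj
    exact (cls i).min'_le j ((mem_filter' (fun j => τ.SameCycle i j) Finset.univ j).2
      ⟨Finset.mem_univ _, (m_same i).trans hj⟩)
  have m_eq_of_same : ∀ i j, τ.SameCycle i j → m i = m j := by
    intro i j hij
    apply _root_.le_antisymm
    · exact m_min i (m j) ((m_same i).symm.trans (hij.trans (m_same j)))
    · exact m_min j (m i) ((m_same j).symm.trans (hij.symm.trans (m_same i)))
  have m_same_of_eq : ∀ i j, m i = m j → τ.SameCycle i j :=
    fun i j h => ((m_same i).trans (h ▸ (m_same j).symm))
  rw [cycleCount_eq_card, cycleCount_eq_card]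
  set Mσ := (@Finset.filter _ (fun i => ∀ j, σ.SameCycle i j → i ≤ j)
    (Classical.decPred _) Finset.univ) with hMσ
  set Mτ := (@Finset.filter _ (fun i => ∀ j, τ.SameCycle i j → i ≤ j)
    (Classical.decPred _) Finset.univ) with hMτ
  have m_mem : ∀ i, m i ∈ Mτ :=
    fun i => (mem_filter' _ _ _).2 ⟨Finset.mem_univ _, fun j hj => m_min i j hj⟩
  have hMσ_mem : ∀ i, i ∈ Mσ ↔ ∀ j, σ.SameCycle i j → i ≤ j := by
    intro i
    rw [hMσ, mem_filter']
    simp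
  have minEq : ∀ x y, x ∈ Mσ → y ∈ Mσ → σ.SameCycle x y → x = y := by
    intro x y hx hy hxy
    exact _root_.le_antisymm ((hMσ_mem x).1 hx y hxy) ((hMσ_mem y).1 hy x hxy.symm)
  have defect : ∀ x y, x ∈ Mσ → y ∈ Mσ → x ≠ y → m x = m y →
      (σ.SameCycle x a ∧ σ.SameCycle b y) ∨ (σ.SameCycle x b ∧ σ.SameCycle a y) := by
    intro x y hx hy hxy hmxy
    rcases hJcyc x y (m_same_of_eq x y hmxy) with h | h | h
    · exact absurd (minEq x y hx hy h) hxy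
    · exact Or.inl h
    · exact Or.inr h
  by_cases hcol : ∃ x ∈ Mσ, ∃ y ∈ Mσ, x ≠ y ∧ m x = m y
  · obtain ⟨x0, hx0, y0, hy0, hxy0, hm0⟩ := hcol
    have huniq : ∀ x ∈ Mσ, ∀ y ∈ Mσ, x ≠ y → m x = m y → x = x0 ∨ y = x0 := by
      intro x hx y hy hxy hmxy
      rcases defect x0 y0 hx0 hy0 hxy0 hm0 with ⟨ha0, hb0⟩ | ⟨ha0, hb0⟩ <;>
        rcases defect x y hx hy hxy hmxy with ⟨ha, hb⟩ | ⟨ha, hb⟩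
      · exact Or.inl (minEq x x0 hx hx0 (ha.trans ha0.symm))
      · exact Or.inr (minEq y x0 hy hx0 (hb.symm.trans ha0.symm))
      · exact Or.inr (minEq y x0 hy hx0 (hb.symm.trans ha0.symm))
      · exact Or.inl (minEq x x0 hx hx0 (ha.trans ha0.symm))
    have hsub : Mσ.erase x0 ⊆ Mσ := Finset.erase_subset _ _
    have hinj : Set.InjOn m (Mσ.erase x0) := by
      intro x hx y hy hmxy
      by_contra hne
      rcases huniq x (hsub hx) y (hsub hy) hne hmxy with h | h
      · exact (Finset.mem_erase.1 hx).1 h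
      · exact (Finset.mem_erase.1 hy).1 h
    have h1 : (Mσ.erase x0).card ≤ Mτ.card :=
      Finset.card_le_card_of_injOn m (fun x _ => m_mem x) hinj
    have h2 : Mσ.card ≤ (Mσ.erase x0).card + 1 := by
      by_cases hx0m : x0 ∈ Mσ
      · rw [Finset.card_erase_of_mem hx0m]
        omega
      · rw [Finset.erase_eq_of_notMem hx0m]
        omega
    omega
  · push_neg at hcol
    have hinj : Set.InjOn m Mσ := by
      intro x hx y hy hmxy
      by_contra hne
      exact hcol x hx y hy hne hmxy
    have h1 : Mσ.card ≤ Mτ.card := Finset.card_le_card_of_injOn m (fun x _ => m_mem x) hinj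
    omega

theorem swap_list_lb {n : ℕ} : ∀ (l : List (Equiv.Perm (Fin n))), (∀ τ ∈ l, τ.IsSwap) →
    n ≤ cycleCount l.prod + l.length
  | [], _ => by simp [cycleCount_one]
  | τ :: l, hsw => by
    obtain ⟨a, b, _, hab⟩ := hsw τ (by simp)
    have ih := swap_list_lb l (fun t ht => hsw t (by simp [ht]))
    have h := cycleCount_swap_mul a b l.prod
    rw [List.prod_cons, hab, List.length_cons]
    omega

-- cycleCount of the big forward cycle is at most n - k + 1
theorem cycleCount_fwdCycle_le {n k : ℕ} (hk : k ≤ n) (hk2 : 2 ≤ k) :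
    cycleCount (fwdCycle ((Finset.univ : Finset (Fin n)).filter (fun i => i.val < k)))
      ≤ n - k + 1 := by
  classical
  set F := (Finset.univ : Finset (Fin n)).filter (fun i => i.val < k) with hF
  set f := fwdCycle F with hf
  have hsortlen : (F.sort (· ≤ ·)).length = k := by
    rw [Finset.length_sort, card_filter_lt hk]
  have hnd : (F.sort (· ≤ ·)).Nodup := Finset.sort_nodup _ _
  have hcyc : f.IsCycle := List.isCycle_formPerm hnd (by omega)
  have hsupp : f.support = F := by
    rw [hf, fwdCycle, List.support_formPerm_of_nodup _ hnd, Finset.sort_toFinset]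
    intro x hx
    rw [hx] at hsortlen
    simp at hsortlen
    omega
  have hmoves : ∀ x ∈ F, f x ≠ x := by
    intro x hx
    rw [← Equiv.Perm.mem_support, hsupp]
    exact hx
  have hsame : ∀ x ∈ F, ∀ y ∈ F, f.SameCycle x y :=
    fun x hx y hy => hcyc.sameCycle (hmoves x hx) (hmoves y hy)
  rw [cycleCount_eq_card]
  set Mf := (@Finset.filter _ (fun i => ∀ j, f.SameCycle i j → i ≤ j)
    (Classical.decPred _) Finset.univ) with hMf
  have hinter : (Mf ∩ F).card ≤ 1 := by
    rw [Finset.card_le_one]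
    intro x hx y hy
    rw [Finset.mem_inter] at hx hy
    have h1 := ((mem_filter' _ _ _).1 hx.1).2
    have h2 := ((mem_filter' _ _ _).1 hy.1).2
    exact _root_.le_antisymm (h1 y (hsame x hx.2 y hy.2)) (h2 x (hsame y hy.2 x hx.2))
  have hsdiff : (Mf \ F).card ≤ n - k := by
    have h1 : Mf \ F ⊆ Finset.univ \ F := by
      intro x hx
      rw [Finset.mem_sdiff] at hx ⊢
      exact ⟨Finset.mem_univ _, hx.2⟩
    calc (Mf \ F).card ≤ (Finset.univ \ F).card := Finset.card_le_card h1
      _ = n - k := by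
          rw [Finset.card_sdiff_of_subset (Finset.subset_univ F), Finset.card_univ, Fintype.card_fin,
            hF, card_filter_lt hk]
  calc Mf.card = (Mf \ F).card + (Mf ∩ F).card := (Finset.card_sdiff_add_card_inter _ _).symm
    _ ≤ n - k + 1 := by omega

theorem trdist_one_fwdCycle_ge {n k : ℕ} (hk : k ≤ n) :
    k - 1 ≤ trdist 1 (fwdCycle ((Finset.univ : Finset (Fin n)).filter (fun i => i.val < k))) := by
  rcases Nat.lt_or_ge k 2 with hk2 | hk2
  · omega
  · obtain ⟨l, hlen, hsw, hprod⟩ := trdist_spec (1 : Equiv.Perm (Fin n))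
      (fwdCycle ((Finset.univ : Finset (Fin n)).filter (fun i => i.val < k)))
    rw [inv_one, one_mul] at hprod
    have h1 := swap_list_lb l hsw
    rw [hprod] at h1
    have h2 := cycleCount_fwdCycle_le hk hk2
    omega

end Helpers

theorem stmt4 (n k : ℕ) (hk : k ≤ n) (L : List (Finset (Fin n)))
    (hdisj : L.Pairwise Disjoint) (hne : ∀ s ∈ L, s.Nonempty)
    (hcover : ∀ i : Fin n, i.val < k ↔ ∃ s ∈ L, i ∈ s)
    (hnc : NoncrossingList L) :
    trdist 1 ((L.map fwdCycle).prod) +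
      trdist ((L.map fwdCycle).prod)
        (fwdCycle ((Finset.univ : Finset (Fin n)).filter (fun i => i.val < k))) =
    trdist 1 (fwdCycle ((Finset.univ : Finset (Fin n)).filter (fun i => i.val < k))) := by
  classical
  by_cases hk0 : k = 0
  · subst hk0
    have hL : L = [] := by
      cases L with
      | nil => rfl
      | cons s L =>
        obtain ⟨x, hx⟩ := hne s (by simp)
        have h := (hcover x).2 ⟨s, by simp, hx⟩
        exact absurd h (Nat.not_lt_zero _)
    have hFe : (Finset.univ : Finset (Fin n)).filter (fun i => i.val < 0) = ∅ := by
      ext x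
      simp
    subst hL
    have hf1 : fwdCycle ((Finset.univ : Finset (Fin n)).filter (fun i => i.val < 0)) = 1 := by
      rw [hFe]
      simp [fwdCycle]
    have h0 : trdist (1 : Equiv.Perm (Fin n)) 1 = 0 :=
      le_antisymm (by simpa using trdist_le [] (by simp) (by simp)) (Nat.zero_le _)
    simp only [List.map_nil, List.prod_nil, hf1, h0]
  · have hkpos : 0 < k := Nat.pos_of_ne_zero hk0
    have hLne : L ≠ [] := by
      have h0n : (0 : ℕ) < n := lt_of_lt_of_le hkpos hk
      obtain ⟨s, hs, _⟩ := (hcover ⟨0, h0n⟩).1 (by simpa using hkpos)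
      exact List.ne_nil_of_mem hs
    have hunion : L.foldr (· ∪ ·) ∅ = (Finset.univ : Finset (Fin n)).filter (fun i => i.val < k) := by
      ext x
      rw [mem_foldr_union', Finset.mem_filter]
      constructor
      · intro h
        exact ⟨Finset.mem_univ _, (hcover x).2 h⟩
      · intro h
        exact (hcover x).1 h.2
    obtain ⟨l, hlen, hlsw, _, hlprod⟩ := key_lemma L.length L rfl hdisj hne hnc hLne
    rw [hunion] at hlprod
    obtain ⟨w, hwlen, hwsw, hwprod⟩ := exists_swaps_blocks L hne
    have hsum : (L.map Finset.card).sum = k := by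
      rw [← card_foldr_union L hdisj, hunion, card_filter_lt hk]
    have ht1 : trdist 1 ((L.map fwdCycle).prod) ≤ k - L.length := by
      have h := trdist_le (a := 1) (b := (L.map fwdCycle).prod) w hwsw
        (by rw [inv_one, one_mul]; exact hwprod)
      omega
    have ht2 : trdist ((L.map fwdCycle).prod)
        (fwdCycle ((Finset.univ : Finset (Fin n)).filter (fun i => i.val < k))) ≤
        L.length - 1 := by
      have hprod' : l.prod = ((L.map fwdCycle).prod)⁻¹ *
          (fwdCycle ((Finset.univ : Finset (Fin n)).filter (fun i => i.val < k))) := by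
        rw [← hlprod]
        group
      have h := trdist_le l hlsw hprod'
      omega
    have ht3 := trdist_one_fwdCycle_ge (n := n) (k := k) hk
    have ht4 := trdist_triangle 1 ((L.map fwdCycle).prod)
      (fwdCycle ((Finset.univ : Finset (Fin n)).filter (fun i => i.val < k)))
    have hLlen : 1 ≤ L.length := by
      cases L with
      | nil => exact absurd rfl hLne
      | cons s L => simp
    omega
end

section
/- Let c_1, c_2, ..., c_r be disjoint forward cycles on subsets of {1,...,k} whose supports form a noncrossing partition of {1,...,k}, and let f = (1 2 ... k) be the full forward cycle. Then the product c_1^{-2} c_2^{-2} ... c_r^{-2} f is a single cycle on {1,...,k} (i.e., it acts transitively on {1,...,k}). -/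
open Equiv

section AuxHelp
open List
variable {α : Type*} [DecidableEq α] {n : ℕ}



lemma swap_shift {a b x : α} (hab : a ≠ b) (hxb : x ≠ b) :
    Equiv.swap a b * Equiv.swap a x = Equiv.swap a x * Equiv.swap x b := by
  by_cases hax : a = x
  · subst hax; ext y; simp
  · ext y
    simp only [Equiv.Perm.mul_apply, Equiv.swap_apply_def]
    split_ifs <;> simp_all

-- disjoint-support commutation for swap and formPerm
lemma swap_commute_formPerm {a b : α} {l : List α} (ha : a ∉ l) (hb : b ∉ l) :
    Commute (Equiv.swap a b) l.formPerm := by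
  apply Equiv.Perm.Disjoint.commute
  intro x
  by_cases hx : x ∈ l
  · left; exact Equiv.swap_apply_of_ne_of_ne (fun h => ha (h ▸ hx)) (fun h => hb (h ▸ hx))
  · right; exact List.formPerm_apply_of_notMem hx

lemma swap_mul_formPerm_cons (w v : α) (ys : List α) (hw : w ∉ ys) (hv : v ∉ ys) (hwv : w ≠ v) :
    Equiv.swap w v * formPerm (v :: ys) = formPerm (w :: ys) * Equiv.swap w v := by
  induction ys with
  | nil => simp
  | cons y ys ih =>
    have hwy : w ≠ y := fun h => hw (h ▸ mem_cons_self (a := y) (l := ys))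
    have hvy : v ≠ y := fun h => hv (h ▸ mem_cons_self (a := y) (l := ys))
    have hw' : w ∉ ys := fun h => hw (mem_cons_of_mem y h)
    have hv' : v ∉ ys := fun h => hv (mem_cons_of_mem y h)
    rw [formPerm_cons_cons, formPerm_cons_cons, ← mul_assoc]
    have hcomm : formPerm (y :: ys) * Equiv.swap w v = Equiv.swap w v * formPerm (y :: ys) :=
      ((swap_commute_formPerm (by simp [hwy, hw']) (by simp [hvy, hv'])).eq).symm
    rw [mul_assoc (Equiv.swap w y), hcomm, ← mul_assoc]
    congr 1
    exact (swap_shift hwy hvy).symm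


/-- Lemma C -/
lemma formPerm_splice (w v : α) (xs ys : List α) (hw : w ∉ ys) (hv : v ∉ ys) (hwv : w ≠ v) :
    formPerm (xs ++ w :: v :: ys) = formPerm (xs ++ w :: ys) * Equiv.swap w v := by
  induction xs with
  | nil =>
    simp only [nil_append, formPerm_cons_cons]
    exact swap_mul_formPerm_cons w v ys hw hv hwv
  | cons x xs ih =>
    cases xs with
    | nil =>
      simp only [nil_append, cons_append, formPerm_cons_cons] at *
      rw [mul_assoc, ← ih]
    | cons y xs' =>
      simp only [cons_append, formPerm_cons_cons] at *
      rw [mul_assoc, ← ih]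

/-- Lemma A -/
lemma swap_mul_formPerm_append (a b : α) (l₁ l₂ : List α) (hab : a ≠ b) (hb : b ∉ l₁) :
    Equiv.swap a b * formPerm (a :: (l₁ ++ b :: l₂)) = formPerm (a :: l₁) * formPerm (b :: l₂) := by
  induction l₁ generalizing a with
  | nil =>
    simp only [nil_append, formPerm_cons_cons, formPerm_singleton, one_mul, ← mul_assoc,
      Equiv.swap_mul_self]
  | cons x l₁ ih =>
    have hxb : x ≠ b := fun h => hb (h ▸ mem_cons_self (a := x) (l := l₁))
    have hb' : b ∉ l₁ := fun h => hb (mem_cons_of_mem x h)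
    simp only [cons_append, formPerm_cons_cons]
    rw [← mul_assoc, swap_shift hab hxb, mul_assoc, ih x hxb hb', ← mul_assoc]

lemma formPerm_apply_mid (u v : α) (l₁ l₂ : List α) (huv : u ≠ v) (hu : u ∉ l₂) (hv : v ∉ l₁) :
    formPerm (l₁ ++ u :: v :: l₂) u = v := by
  induction l₁ with
  | nil =>
    rw [nil_append, formPerm_cons_cons, Equiv.Perm.mul_apply,
      formPerm_apply_of_notMem (by simp [huv, hu] : u ∉ v :: l₂), Equiv.swap_apply_left]
  | cons x l₁ ih =>
    have hvx : v ≠ x := fun h => hv (h ▸ mem_cons_self (a := x) (l := l₁))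
    have hv' : v ∉ l₁ := fun h => hv (mem_cons_of_mem x h)
    cases l₁ with
    | nil =>
      simp only [nil_append] at ih
      show (x :: u :: v :: l₂).formPerm u = v
      rw [formPerm_cons_cons, Equiv.Perm.mul_apply, ih hv',
        Equiv.swap_apply_of_ne_of_ne hvx huv.symm]
    | cons y l₁' =>
      have hvy : v ≠ y := fun h => hv' (h ▸ mem_cons_self (a := y) (l := l₁'))
      rw [cons_append, cons_append, formPerm_cons_cons, Equiv.Perm.mul_apply]
      rw [cons_append] at ih
      rw [ih hv', Equiv.swap_apply_of_ne_of_ne hvx hvy]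



lemma sorted_split {β : Type*} [LinearOrder β] : ∀ (l : List β), l.Pairwise (· < ·) →
    ∀ u v, u ∈ l → v ∈ l → u < v → (∀ x ∈ l, ¬(u < x ∧ x < v)) →
    ∃ l₁ l₂, l = l₁ ++ u :: v :: l₂ := by
  intro l
  induction l with
  | nil => intro _ u v hu; exact absurd hu (not_mem_nil (a := u))
  | cons a t ih =>
    intro hs u v hu hv huv hbet
    rw [List.pairwise_cons] at hs
    rcases List.mem_cons.mp hu with rfl | hu
    · have hvt : v ∈ t := by
        rcases List.mem_cons.mp hv with rfl | hv
        · exact absurd huv (lt_irrefl v)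
        · exact hv
      cases t with
      | nil => exact absurd hvt (not_mem_nil (a := v))
      | cons b t' =>
        by_cases hbv : b = v
        · exact ⟨[], t', by rw [hbv, nil_append]⟩
        · exfalso
          have hub : u < b := hs.1 b (mem_cons_self (a := b) (l := t'))
          have hvt' : v ∈ t' := by
            rcases List.mem_cons.mp hvt with rfl | h
            · exact absurd rfl hbv
            · exact h
          have hbv' : b < v := by
            rw [List.pairwise_cons] at hs
            exact hs.2.1 v hvt'
          exact hbet b (mem_cons_of_mem u (mem_cons_self (a := b) (l := t'))) ⟨hub, hbv'⟩
    · have hau : a < u := hs.1 u hu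
      have hvt : v ∈ t := by
        rcases List.mem_cons.mp hv with rfl | h
        · exact absurd (hau.trans huv) (lt_irrefl v)
        · exact h
      obtain ⟨l₁, l₂, h⟩ := ih hs.2 u v hu hvt huv
        (fun x hx => hbet x (mem_cons_of_mem a hx))
      exact ⟨a :: l₁, l₂, by rw [h, cons_append]⟩

lemma exists_rotate_head {l : List α} {v : α} (hv : v ∈ l) (hn : l.Nodup) :
    ∃ t, l.formPerm = (v :: t).formPerm ∧ (v :: t).Perm l := by
  obtain ⟨l₁, l₂, rfl⟩ := List.append_of_mem hv
  have hrot : (l₁ ++ v :: l₂).rotate l₁.length = v :: (l₂ ++ l₁) := by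
    rw [List.rotate_eq_drop_append_take (by simp : l₁.length ≤ (l₁ ++ v :: l₂).length),
      List.drop_left, List.take_left, cons_append]
  exact ⟨l₂ ++ l₁, by rw [← List.formPerm_rotate _ hn l₁.length, hrot],
    hrot ▸ List.rotate_perm _ _⟩

lemma exists_rotate_last {l : List α} {w : α} (hw : w ∈ l) (hn : l.Nodup) :
    ∃ t, l.formPerm = (t ++ [w]).formPerm ∧ (t ++ [w]).Perm l := by
  obtain ⟨l₁, l₂, rfl⟩ := List.append_of_mem hw
  have hrot : (l₁ ++ w :: l₂).rotate (l₁.length + 1) = (l₂ ++ l₁) ++ [w] := by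
    rw [show l₁ ++ w :: l₂ = (l₁ ++ [w]) ++ l₂ by simp,
      List.rotate_eq_drop_append_take (by simp : l₁.length + 1 ≤ ((l₁ ++ [w]) ++ l₂).length)]
    rw [show l₁.length + 1 = (l₁ ++ [w]).length by simp, List.drop_left, List.take_left,
      append_assoc]
  exact ⟨l₂ ++ l₁, by rw [← List.formPerm_rotate _ hn (l₁.length + 1), hrot],
    hrot ▸ List.rotate_perm _ _⟩

lemma rotate_one_formPerm {u p : α} {m : List α} (hn : (u :: p :: m).Nodup) :
    formPerm (p :: m ++ [u]) = formPerm (u :: p :: m) := by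
  have := List.formPerm_rotate (u :: p :: m) hn 1
  rw [List.rotate_cons_succ, List.rotate_zero] at this
  simpa using this



lemma sort_erase (s : Finset (Fin n)) (a : Fin n) :
    Finset.sort (s.erase a) (· ≤ ·) = (Finset.sort s (· ≤ ·)).erase a := by
  refine (fun hp hs => List.Perm.eq_of_pairwise' (Finset.pairwise_sort _ _) hs hp) ?_ ?_
  · refine List.perm_of_nodup_nodup_toFinset_eq (Finset.sort_nodup _ _)
      ((Finset.sort_nodup _ _).erase a) ?_
    rw [Finset.sort_toFinset]
    ext x
    simp only [List.mem_toFinset, (Finset.sort_nodup s _).mem_erase_iff, Finset.mem_sort,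
      Finset.mem_erase]
  · exact (Finset.pairwise_sort s _).sublist (List.erase_sublist (a := a))

lemma fwdCycle_fix {s : Finset (Fin n)} {x : Fin n} (h : x ∉ s) : fwdCycle s x = x :=
  List.formPerm_apply_of_notMem (by simpa using h)

lemma fwdCycle_singleton (x : Fin n) : fwdCycle ({x} : Finset (Fin n)) = 1 := by
  unfold fwdCycle; rw [Finset.sort_singleton]; exact List.formPerm_singleton x

lemma fwdCycle_mem {s : Finset (Fin n)} {x : Fin n} (h : x ∈ s) : fwdCycle s x ∈ s := by
  by_contra hy
  have h1 : fwdCycle s (fwdCycle s x) = fwdCycle s x := fwdCycle_fix hy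
  have h2 := (fwdCycle s).injective h1
  rw [h2] at hy; exact hy h

lemma fwdCycle_inv_mem {s : Finset (Fin n)} {x : Fin n} (h : x ∈ s) : (fwdCycle s)⁻¹ x ∈ s := by
  by_contra hy
  have h1 : fwdCycle s ((fwdCycle s)⁻¹ x) = (fwdCycle s)⁻¹ x := fwdCycle_fix hy
  rw [show fwdCycle s ((fwdCycle s)⁻¹ x) = x from (fwdCycle s).apply_symm_apply x] at h1
  rw [← h1] at hy; exact hy h

lemma fwdCycle_inv_fix {s : Finset (Fin n)} {x : Fin n} (h : x ∉ s) : (fwdCycle s)⁻¹ x = x := by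
  have := fwdCycle_fix (s := s) h
  exact (Equiv.Perm.inv_eq_iff_eq).mpr this.symm

lemma fwdCycle_ne_self {s : Finset (Fin n)} {x : Fin n} (h : x ∈ s) (h2 : 2 ≤ s.card) :
    fwdCycle s x ≠ x := by
  have hl : 2 ≤ (s.sort (· ≤ ·)).length := by rwa [Finset.length_sort]
  exact (List.formPerm_apply_mem_ne_self_iff _ (Finset.sort_nodup s _) _
    ((Finset.mem_sort _).mpr h)).mpr hl

lemma disjoint_fwdCycle {s t : Finset (Fin n)} (h : _root_.Disjoint s t) :
    (fwdCycle s).Disjoint (fwdCycle t) := by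
  intro x
  by_cases hx : x ∈ s
  · exact Or.inr (fwdCycle_fix (Finset.disjoint_left.mp h hx))
  · exact Or.inl (fwdCycle_fix hx)

lemma commute_fwdCycle_prod {B : Finset (Fin n)} {L : List (Finset (Fin n))}
    (h : ∀ C ∈ L, _root_.Disjoint B C) : Commute (fwdCycle B) (L.map fwdCycle).prod := by
  apply Commute.list_prod_right
  intro p hp
  obtain ⟨C, hC, rfl⟩ := List.mem_map.mp hp
  exact (disjoint_fwdCycle (h C hC)).commute

lemma prod_fwdCycle_fix {L : List (Finset (Fin n))} {x : Fin n} (h : ∀ B ∈ L, x ∉ B) :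
    (L.map fwdCycle).prod x = x := by
  induction L with
  | nil => rfl
  | cons B t ih =>
    rw [List.map_cons, List.prod_cons, Equiv.Perm.mul_apply,
      ih (fun C hC => h C (mem_cons_of_mem B hC)), fwdCycle_fix (h B (mem_cons_self (a := B) (l := t)))]

lemma prod_fwdCycle_inv_fix {L : List (Finset (Fin n))} {x : Fin n} (h : ∀ B ∈ L, x ∉ B) :
    ((L.map fwdCycle).prod)⁻¹ x = x :=
  (Equiv.Perm.inv_eq_iff_eq).mpr (prod_fwdCycle_fix h).symm

/-- rewrite the product of squared inverses -/
lemma prod_sq_eq (L : List (Finset (Fin n))) (hd : L.Pairwise _root_.Disjoint) :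
    (L.map fun s => (fwdCycle s)⁻¹ * (fwdCycle s)⁻¹).prod
      = ((L.map fwdCycle).prod)⁻¹ * ((L.map fwdCycle).prod)⁻¹ := by
  induction L with
  | nil => simp
  | cons B t ih =>
    rw [List.pairwise_cons] at hd
    have hc : Commute (fwdCycle B) (t.map fwdCycle).prod := commute_fwdCycle_prod hd.1
    rw [List.map_cons, List.prod_cons, List.map_cons, List.prod_cons, ih hd.2, mul_inv_rev]
    have h1 : Commute (fwdCycle B)⁻¹ ((t.map fwdCycle).prod)⁻¹ := hc.inv_inv
    set a := (fwdCycle B)⁻¹ with ha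
    set b := ((t.map fwdCycle).prod)⁻¹ with hb
    calc a * a * (b * b) = a * (a * b) * b := by group
      _ = a * (b * a) * b := by rw [h1.eq]
      _ = (a * b) * (a * b) := by group
      _ = (b * a) * (b * a) := by rw [h1.eq]
      _ = (fwdCycle B * (t.map fwdCycle).prod)⁻¹ * (fwdCycle B * (t.map fwdCycle).prod)⁻¹ := by
          rw [mul_inv_rev]



lemma length_le_sum_card {L : List (Finset (Fin n))} (h : ∀ B ∈ L, B.Nonempty) :
    L.length ≤ (L.map Finset.card).sum := by
  induction L with
  | nil => simp
  | cons B t ih =>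
    simp only [List.map_cons, List.sum_cons, List.length_cons]
    have h1 : 1 ≤ B.card := Finset.card_pos.mpr (h B (mem_cons_self (a := B) (l := t)))
    have h2 := ih (fun C hC => h C (mem_cons_of_mem B hC))
    omega

lemma pairwise_cons_erase {L : List (Finset (Fin n))} {B : Finset (Fin n)} (hB : B ∈ L)
    (hd : L.Pairwise _root_.Disjoint) : (B :: L.erase B).Pairwise _root_.Disjoint :=
  (List.Perm.pairwise_iff (fun {_ _} h => _root_.Disjoint.symm h) (List.perm_cons_erase hB)).mp hd

lemma mem_erase_block_ne {L : List (Finset (Fin n))} {B C : Finset (Fin n)} (hB : B ∈ L)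
    (hd : L.Pairwise _root_.Disjoint) (hne : ∀ D ∈ L, D.Nonempty) (hC : C ∈ L.erase B) :
    C ≠ B := by
  intro h; subst h
  have h1 := (List.pairwise_cons.mp (pairwise_cons_erase hB hd)).1 C hC
  rw [disjoint_self] at h1
  exact Finset.not_nonempty_empty (h1 ▸ hne C hB)

lemma exists_adjacent_pair {L : List (Finset (Fin n))} {S : Finset (Fin n)}
    (hd : L.Pairwise _root_.Disjoint)
    (hcover : ∀ i, i ∈ S ↔ ∃ B ∈ L, i ∈ B)
    (hnc : NoncrossingList L)
    (hL : L ≠ [])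
    (h2 : ∀ B ∈ L, 2 ≤ B.card) :
    ∃ B ∈ L, ∃ u ∈ B, ∃ v ∈ B, u < v ∧ ∀ x ∈ S, ¬(u < x ∧ x < v) := by
  set f : Finset (Fin n) → ℕ := fun B => (B ×ˢ B).sup (fun p => p.1.val - p.2.val) with hf
  obtain ⟨B, hBarg⟩ : ∃ B, B ∈ L.argmin f := by
    cases h : L.argmin f with
    | none => exact absurd (List.argmin_eq_none.mp h) hL
    | some B => exact ⟨B, by simp [h]⟩
  have hBL : B ∈ L := List.argmin_mem hBarg
  have hBcard := h2 B hBL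
  have hBne : B.Nonempty := Finset.card_pos.mp (by omega)
  set u := B.min' hBne with hu
  have hu_mem : u ∈ B := B.min'_mem hBne
  have hBern : (B.erase u).Nonempty := by
    rw [← Finset.card_pos, Finset.card_erase_of_mem hu_mem]; omega
  set v := (B.erase u).min' hBern with hv
  have hv_mem' : v ∈ B.erase u := Finset.min'_mem _ _
  have hv_mem : v ∈ B := Finset.mem_of_mem_erase hv_mem'
  have hvu : v ≠ u := Finset.ne_of_mem_erase hv_mem'
  have huv : u < v := lt_of_le_of_ne (Finset.min'_le _ _ hv_mem) hvu.symm
  refine ⟨B, hBL, u, hu_mem, v, hv_mem, huv, ?_⟩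
  rintro x hxS ⟨hux, hxv⟩
  have hxB : x ∉ B := by
    intro hxB
    have hxe : x ∈ B.erase u := Finset.mem_erase.mpr ⟨ne_of_gt hux, hxB⟩
    exact absurd (Finset.min'_le _ _ hxe) (not_le.mpr hxv)
  obtain ⟨T, hTL, hxT⟩ := (hcover x).mp hxS
  have hTB : T ≠ B := fun h => hxB (h ▸ hxT)
  have hdisjTB : _root_.Disjoint T B :=
    hd.forall hTL hBL hTB
  set M := B.max' hBne with hM
  have hmax_mem : M ∈ B := B.max'_mem hBne
  have hvM : v ≤ M := Finset.le_max' _ v hv_mem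
  have hT_in : ∀ z ∈ T, u < z ∧ z < M := by
    intro z hzT
    have hzB : z ∉ B := Finset.disjoint_left.mp hdisjTB hzT
    by_cases hzx : z = x
    · exact hzx ▸ ⟨hux, lt_of_lt_of_le hxv hvM⟩
    rcases lt_trichotomy z u with hzu | hzu | hzu
    · exact absurd ⟨z, u, x, v, hzu, hux, hxv, T, hTL, B, hBL, hTB, hzT, hxT, hu_mem, hv_mem⟩ hnc
    · exact absurd (hzu ▸ hu_mem) hzB
    · refine ⟨hzu, ?_⟩
      by_contra hzM
      have hMz : M < z := lt_of_le_of_ne (not_lt.mp hzM) (fun h => hzB (h ▸ hmax_mem))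
      exact absurd ⟨u, x, M, z, hux, lt_of_lt_of_le hxv hvM, hMz,
        B, hBL, T, hTL, hTB.symm, hu_mem, hmax_mem, hxT, hzT⟩ hnc
  have hfT : f T < M.val - u.val := by
    rw [hf]
    refine (Finset.sup_lt_iff ?_).mpr ?_
    · have h3 : u < M := hux.trans (lt_of_lt_of_le hxv hvM)
      have h4 : u.val < M.val := h3
      rw [Nat.bot_eq_zero]
      omega
    · rintro ⟨p1, p2⟩ hp
      rw [Finset.mem_product] at hp
      have h1 := hT_in p1 hp.1
      have h2' := hT_in p2 hp.2
      have ha : p1.val < M.val := h1.2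
      have hb : u.val < p2.val := h2'.1
      simp only
      omega
  have hfB : M.val - u.val ≤ f B := by
    have h5 := Finset.le_sup (f := fun p : Fin n × Fin n => p.1.val - p.2.val) (s := B ×ˢ B)
      (b := (M, u)) (Finset.mem_product.mpr ⟨hmax_mem, hu_mem⟩)
    simpa [hf] using h5
  have harg := List.le_of_mem_argmin hTL hBarg
  omega



lemma fwdCycle_erase {S : Finset (Fin n)} {z : Fin n} (hz : z ∈ S)
    (hS2 : (S.erase z).Nonempty) :
    ∃ w ∈ S.erase z, fwdCycle S = fwdCycle (S.erase z) * Equiv.swap w z := by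
  obtain ⟨l₁, l₂, hsplit⟩ := List.append_of_mem ((Finset.mem_sort (α := Fin n) (· ≤ ·)).mpr hz)
  have hnd : (S.sort (· ≤ ·)).Nodup := Finset.sort_nodup _ _
  have hndz : (l₁ ++ z :: l₂).Nodup := hsplit ▸ hnd
  have hz1 : z ∉ l₁ := by
    intro h
    rw [List.nodup_append] at hndz
    exact hndz.2.2 _ h _ mem_cons_self rfl
  have hz2 : z ∉ l₂ := by
    rw [List.nodup_append, List.nodup_cons] at hndz
    exact hndz.2.1.1
  have hserase : Finset.sort (S.erase z) (· ≤ ·) = l₁ ++ l₂ := by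
    rw [sort_erase, hsplit, List.erase_append_right _ hz1, List.erase_cons_head]
  rcases List.eq_nil_or_concat l₁ with rfl | ⟨t, w, rfl⟩
  · -- z is the head of the sort
    have hl₂ : l₂ ≠ [] := by
      intro h
      rw [h] at hserase
      simp only [nil_append] at hserase
      obtain ⟨y, hy⟩ := hS2
      have := (Finset.mem_sort (α := Fin n) (· ≤ ·)).mpr hy
      rw [hserase] at this
      exact absurd this (not_mem_nil (a := y))
    rcases List.eq_nil_or_concat l₂ with rfl | ⟨t, w, rfl⟩
    · exact absurd rfl hl₂
    simp only [List.concat_eq_append] at hsplit hserase hz2 hndz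
    refine ⟨w, ?_, ?_⟩
    · rw [← Finset.mem_sort (· ≤ ·), hserase]
      simp
    · have hwz : w ≠ z := by
        intro h; exact hz2 (h ▸ (by simp : w ∈ t ++ [w]))
      show (S.sort (· ≤ ·)).formPerm = (Finset.sort (S.erase z) (· ≤ ·)).formPerm * Equiv.swap w z
      rw [hserase, hsplit]
      simp only [nil_append] at hndz ⊢
      have hrot : (z :: (t ++ [w])).formPerm = ((t ++ [w]) ++ [z]).formPerm := by
        have h1 := List.formPerm_rotate_one (z :: (t ++ [w])) hndz
        rw [List.rotate_cons_succ, List.rotate_zero] at h1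
        exact h1.symm
      rw [hrot, append_assoc, show [w] ++ [z] = w :: z :: [] from rfl,
        formPerm_splice w z t [] (not_mem_nil (a := w)) (not_mem_nil (a := z)) hwz]
  · simp only [List.concat_eq_append] at hsplit hserase hz1
    have hndz' : (t ++ [w] ++ z :: l₂).Nodup := by simpa using hndz
    refine ⟨w, ?_, ?_⟩
    · rw [← Finset.mem_sort (· ≤ ·), hserase]; simp
    · have hwz : w ≠ z := by
        intro h; exact hz1 (h ▸ (by simp : w ∈ t ++ [w]))
      show (S.sort (· ≤ ·)).formPerm = (Finset.sort (S.erase z) (· ≤ ·)).formPerm * Equiv.swap w z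
      rw [hserase, hsplit, append_assoc, singleton_append, append_assoc, singleton_append]
      exact formPerm_splice w z t l₂ (by
          intro h
          rw [append_assoc, singleton_append, List.nodup_append] at hndz'
          exact (List.nodup_cons.mp hndz'.2.1).1 (mem_cons_of_mem z h))
        hz2 hwz

lemma pairComm (M : List (Finset (Fin n))) (hM : M.Pairwise _root_.Disjoint) :
    (M.map fun s => (fwdCycle s)⁻¹ * (fwdCycle s)⁻¹).Pairwise Commute := by
  refine List.Pairwise.map _ ?_ hM
  intro a b hab
  have h2 := ((disjoint_fwdCycle hab).commute.inv_left).inv_right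
  exact (h2.mul_left h2).mul_right (h2.mul_left h2)

lemma perm_toFinset {l₁ l₂ : List α} (h : l₁.Perm l₂) : l₁.toFinset = l₂.toFinset :=
  List.toFinset.ext_iff.mpr (fun x => h.mem_iff)

lemma main_lemma : ∀ (N : ℕ) (S : Finset (Fin n)) (L : List (Finset (Fin n))),
    2 * (L.map Finset.card).sum ≤ N + L.length →
    L.Pairwise _root_.Disjoint →
    (∀ B ∈ L, B.Nonempty) →
    (∀ i : Fin n, i ∈ S ↔ ∃ B ∈ L, i ∈ B) →
    NoncrossingList L →
    ∃ l : List (Fin n), l.Nodup ∧ l.toFinset = S ∧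
      ((L.map fun s => (fwdCycle s)⁻¹ * (fwdCycle s)⁻¹).prod * fwdCycle S) = l.formPerm := by
  intro N
  induction N using Nat.strong_induction_on with
  | _ N IH =>
  intro S L hN hd hne hcover hnc
  by_cases hsing : ∀ B ∈ L, B.card = 1
  · refine ⟨S.sort (· ≤ ·), Finset.sort_nodup _ _, Finset.sort_toFinset _ _, ?_⟩
    have hprod1 : (L.map fun s => (fwdCycle s)⁻¹ * (fwdCycle s)⁻¹).prod = 1 := by
      apply List.prod_eq_one
      intro x hx
      obtain ⟨B, hB, rfl⟩ := List.mem_map.mp hx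
      obtain ⟨a, rfl⟩ := Finset.card_eq_one.mp (hsing B hB)
      rw [fwdCycle_singleton]; simp
    rw [hprod1, one_mul]; rfl
  push_neg at hsing
  obtain ⟨B₀, hB₀L, hB₀⟩ := hsing
  have hB₀2 : 2 ≤ B₀.card := by
    have := Finset.card_pos.mpr (hne B₀ hB₀L); omega
  have hlen := length_le_sum_card hne
  have hsum2 : 2 ≤ (L.map Finset.card).sum := by
    have hperm : L.Perm (B₀ :: L.erase B₀) := List.perm_cons_erase hB₀L
    have h5 := (hperm.map Finset.card).sum_eq
    simp only [List.map_cons, List.sum_cons] at h5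
    omega
  have hN1 : 1 ≤ N := by omega
  by_cases hZ : ∃ Z ∈ L, Z.card = 1
  · -- reduction 2 : singleton block removal
    obtain ⟨Z, hZL, hZ1⟩ := hZ
    obtain ⟨z, rfl⟩ := Finset.card_eq_one.mp hZ1
    set L' := L.erase {z} with hL'
    have hpermL : L.Perm ({z} :: L') := List.perm_cons_erase hZL
    have hpw : ({z} :: L').Pairwise _root_.Disjoint := pairwise_cons_erase hZL hd
    have hd' : L'.Pairwise _root_.Disjoint := (List.pairwise_cons.mp hpw).2
    have hzdisj : ∀ C ∈ L', _root_.Disjoint {z} C := (List.pairwise_cons.mp hpw).1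
    have hne' : ∀ B ∈ L', B.Nonempty := fun B hB => hne B (List.mem_of_mem_erase hB)
    have hnc' : NoncrossingList L' := by
      rintro ⟨a, b, c, d, h1, h2, h3, s, hs, t, ht, h4⟩
      exact hnc ⟨a, b, c, d, h1, h2, h3, s, List.mem_of_mem_erase hs, t,
        List.mem_of_mem_erase ht, h4⟩
    have hzS : z ∈ S := (hcover z).mpr ⟨{z}, hZL, Finset.mem_singleton_self z⟩
    have hcover' : ∀ i : Fin n, i ∈ S.erase z ↔ ∃ B ∈ L', i ∈ B := by
      intro i
      constructor
      · rintro hi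
        rw [Finset.mem_erase] at hi
        obtain ⟨B, hBL, hiB⟩ := (hcover i).mp hi.2
        have hBz : B ≠ {z} := by
          intro h; subst h; exact hi.1 (Finset.mem_singleton.mp hiB)
        exact ⟨B, (List.mem_erase_of_ne hBz).mpr hBL, hiB⟩
      · rintro ⟨B, hBL', hiB⟩
        rw [Finset.mem_erase]
        refine ⟨?_, (hcover i).mpr ⟨B, List.mem_of_mem_erase hBL', hiB⟩⟩
        intro h; subst h
        exact Finset.disjoint_left.mp (hzdisj B hBL') (Finset.mem_singleton_self i) hiB
    have hS'ne : (S.erase z).Nonempty := by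
      obtain ⟨b, hb⟩ := hne B₀ hB₀L
      have hB₀z : B₀ ≠ {z} := by intro h; rw [h] at hB₀2; simp at hB₀2
      have hB₀L' : B₀ ∈ L' := (List.mem_erase_of_ne hB₀z).mpr hB₀L
      refine ⟨b, Finset.mem_erase.mpr ⟨?_, (hcover b).mpr ⟨B₀, hB₀L, hb⟩⟩⟩
      intro h; subst h
      exact Finset.disjoint_left.mp (hzdisj B₀ hB₀L') (Finset.mem_singleton_self b) hb
    obtain ⟨w, hwS', hferase⟩ := fwdCycle_erase hzS hS'ne
    have hsum' : (L.map Finset.card).sum = 1 + (L'.map Finset.card).sum := by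
      have h5 := (hpermL.map Finset.card).sum_eq
      simpa using h5
    have hlenL : L.length = L'.length + 1 := hpermL.length_eq
    have hN' : 2 * (L'.map Finset.card).sum ≤ (N - 1) + L'.length := by
      have hlen' := length_le_sum_card hne'
      omega
    obtain ⟨l', hnd', htf', heq'⟩ := IH (N - 1) (by omega) (S.erase z) L' hN' hd' hne' hcover' hnc'
    have hprodeq : (L.map fun s => (fwdCycle s)⁻¹ * (fwdCycle s)⁻¹).prod
        = (L'.map fun s => (fwdCycle s)⁻¹ * (fwdCycle s)⁻¹).prod := by
      rw [(hpermL.map (fun s => (fwdCycle s)⁻¹ * (fwdCycle s)⁻¹)).prod_eq' (pairComm L hd)]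
      simp [fwdCycle_singleton]
    have hwl' : w ∈ l' := by rw [← List.mem_toFinset, htf']; exact hwS'
    obtain ⟨t, hrot, hpermt⟩ := exists_rotate_last hwl' hnd'
    have hndtw : (t ++ [w]).Nodup := hpermt.nodup_iff.mpr hnd'
    have hzt : z ∉ t ++ [w] := by
      intro h
      have h5 : z ∈ l' := (hpermt.mem_iff).mp h
      rw [← List.mem_toFinset, htf', Finset.mem_erase] at h5
      exact h5.1 rfl
    have hwz : w ≠ z := by intro h; exact hzt (by simp [h])
    refine ⟨t ++ [w, z], ?_, ?_, ?_⟩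
    · rw [show t ++ [w, z] = (t ++ [w]) ++ [z] by simp, List.nodup_append]
      refine ⟨hndtw, List.nodup_singleton z, ?_⟩
      intro a ha _ ha'
      rw [List.mem_singleton] at ha'
      subst ha'
      exact fun h => hzt (h ▸ ha)
    · rw [show t ++ [w, z] = (t ++ [w]) ++ [z] by simp, List.toFinset_append,
        perm_toFinset hpermt, htf']
      simp only [List.toFinset_cons, List.toFinset_nil, LawfulSingleton.insert_empty_eq]
      rw [Finset.union_comm, ← Finset.insert_eq, Finset.insert_erase hzS]
    · rw [hprodeq, hferase, ← mul_assoc, heq', hrot]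
      exact (formPerm_splice w z t [] (List.not_mem_nil (a := w)) (List.not_mem_nil (a := z)) hwz).symm
  · -- reduction 1 : split an adjacent pair off a block
    push_neg at hZ
    have h2all : ∀ B ∈ L, 2 ≤ B.card := by
      intro B hB
      have h1 := Finset.card_pos.mpr (hne B hB)
      have h5 := hZ B hB
      omega
    obtain ⟨B, hBL, u, huB, v, hvB, huv, hbet⟩ :=
      exists_adjacent_pair hd hcover hnc (List.ne_nil_of_mem hB₀L) h2all
    have hBS : ∀ x ∈ B, x ∈ S := fun x hx => (hcover x).mpr ⟨B, hBL, hx⟩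
    have huvne : u ≠ v := ne_of_lt huv
    obtain ⟨xsB, ysB, hsB⟩ := sorted_split (B.sort (· ≤ ·)) (Finset.sortedLT_sort B).pairwise u v
      ((Finset.mem_sort (· ≤ ·)).mpr huB) ((Finset.mem_sort (· ≤ ·)).mpr hvB) huv
      (fun x hx => hbet x (hBS x ((Finset.mem_sort (· ≤ ·)).mp hx)))
    obtain ⟨xsS, ysS, hsS⟩ := sorted_split (S.sort (· ≤ ·)) (Finset.sortedLT_sort S).pairwise u v
      ((Finset.mem_sort (· ≤ ·)).mpr (hBS u huB)) ((Finset.mem_sort (· ≤ ·)).mpr (hBS v hvB)) huv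
      (fun x hx => hbet x ((Finset.mem_sort (· ≤ ·)).mp hx))
    have hndB : (xsB ++ u :: v :: ysB).Nodup := hsB ▸ Finset.sort_nodup B _
    have hndS : (xsS ++ u :: v :: ysS).Nodup := hsS ▸ Finset.sort_nodup S _
    have hndB2 : ((xsB ++ [u]) ++ v :: ysB).Nodup := by simpa using hndB
    have hu_ysB : u ∉ ysB := by
      rw [List.nodup_append, List.nodup_cons, List.nodup_cons] at hndB
      exact fun h => hndB.2.1.1 (List.mem_cons_of_mem v h)
    have hv_ysB : v ∉ ysB := by
      rw [List.nodup_append, List.nodup_cons, List.nodup_cons] at hndB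
      exact hndB.2.1.2.1
    have hv_xsu : v ∉ xsB ++ [u] := by
      rw [List.nodup_append] at hndB2
      exact fun h => hndB2.2.2 _ h _ List.mem_cons_self rfl
    set B' := B.erase v with hB'def
    have hvB' : v ∉ B' := Finset.notMem_erase v B
    have huB' : u ∈ B' := Finset.mem_erase.mpr ⟨huvne, huB⟩
    have hB'B : B' ⊆ B := Finset.erase_subset v B
    have hsortB' : Finset.sort B' (· ≤ ·) = xsB ++ u :: ysB := by
      rw [hB'def, sort_erase, hsB,
        show xsB ++ u :: v :: ysB = (xsB ++ [u]) ++ v :: ysB by simp,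
        List.erase_append_right _ hv_xsu, List.erase_cons_head]
      simp
    have hcB : fwdCycle B = fwdCycle B' * Equiv.swap u v := by
      show (B.sort (· ≤ ·)).formPerm = (B'.sort (· ≤ ·)).formPerm * Equiv.swap u v
      rw [hsortB', hsB]
      exact formPerm_splice u v xsB ysB hu_ysB hv_ysB huvne
    set L₂ := B' :: ({v} : Finset (Fin n)) :: L.erase B with hL₂
    have hpwB : (B :: L.erase B).Pairwise _root_.Disjoint := pairwise_cons_erase hBL hd
    have hdisjB : ∀ C ∈ L.erase B, _root_.Disjoint B C := (List.pairwise_cons.mp hpwB).1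
    have hdE : (L.erase B).Pairwise _root_.Disjoint := (List.pairwise_cons.mp hpwB).2
    have hd₂ : L₂.Pairwise _root_.Disjoint := by
      rw [hL₂, List.pairwise_cons, List.pairwise_cons]
      refine ⟨?_, ?_, hdE⟩
      · intro C hC
        rcases List.mem_cons.mp hC with rfl | hC'
        · exact Finset.disjoint_singleton_right.mpr hvB'
        · exact Finset.disjoint_of_subset_left hB'B (hdisjB C hC')
      · intro C hC
        exact Finset.disjoint_of_subset_left (Finset.singleton_subset_iff.mpr hvB)
          (hdisjB C hC)
    have hne₂ : ∀ C ∈ L₂, C.Nonempty := by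
      intro C hC
      rcases List.mem_cons.mp hC with rfl | hC'
      · exact ⟨u, huB'⟩
      rcases List.mem_cons.mp hC' with rfl | hC2
      · exact ⟨v, Finset.mem_singleton_self v⟩
      · exact hne C (List.mem_of_mem_erase hC2)
    have hEne : ∀ C ∈ L.erase B, C ≠ B := fun C hC => mem_erase_block_ne hBL hd hne hC
    have hcover₂ : ∀ i : Fin n, i ∈ S ↔ ∃ C ∈ L₂, i ∈ C := by
      intro i
      constructor
      · intro hi
        obtain ⟨C, hCL, hiC⟩ := (hcover i).mp hi
        by_cases hCB : C = B
        · subst hCB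
          by_cases hiv : i = v
          · exact ⟨{v}, by simp [hL₂], by simp [hiv]⟩
          · exact ⟨B', by simp [hL₂], Finset.mem_erase.mpr ⟨hiv, hiC⟩⟩
        · exact ⟨C, by simp [hL₂, (List.mem_erase_of_ne hCB).mpr hCL], hiC⟩
      · rintro ⟨C, hCL₂, hiC⟩
        rcases List.mem_cons.mp hCL₂ with rfl | hC'
        · exact hBS i (hB'B hiC)
        rcases List.mem_cons.mp hC' with rfl | hC2
        · rw [Finset.mem_singleton] at hiC
          exact hBS i (hiC ▸ hvB)
        · exact (hcover i).mpr ⟨C, List.mem_of_mem_erase hC2, hiC⟩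
    have hnc₂ : NoncrossingList L₂ := by
      rintro ⟨a, b, c, d, hab, hbc, hcd, s, hs, t, ht, hst, has, hcs, hbt, hdt⟩
      have hmem : ∀ s' : Finset (Fin n), s' ∈ L₂ → (s' = B' ∨ s' = {v}) ∨ s' ∈ L.erase B := by
        intro s' hs'
        rcases List.mem_cons.mp hs' with rfl | hs2
        · exact Or.inl (Or.inl rfl)
        rcases List.mem_cons.mp hs2 with rfl | hs3
        · exact Or.inl (Or.inr rfl)
        · exact Or.inr hs3
      have hsubB2 : ∀ (s' : Finset (Fin n)) (x : Fin n), (s' = B' ∨ s' = {v}) → x ∈ s' → x ∈ B := by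
        rintro s' x (rfl | rfl) hx
        · exact hB'B hx
        · exact (Finset.mem_singleton.mp hx) ▸ hvB
      rcases hmem s hs with hsB2 | hsE
      · rcases hmem t ht with htB2 | htE
        · rcases hsB2 with rfl | rfl
          · rcases htB2 with rfl | rfl
            · exact hst rfl
            · rw [Finset.mem_singleton] at hbt hdt
              exact absurd (hbc.trans hcd) (by rw [hbt, hdt]; exact lt_irrefl v)
          · rcases htB2 with rfl | rfl
            · rw [Finset.mem_singleton] at has hcs
              exact absurd (hab.trans hbc) (by rw [has, hcs]; exact lt_irrefl v)
            · exact hst rfl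
        · exact hnc ⟨a, b, c, d, hab, hbc, hcd, B, hBL, t, List.mem_of_mem_erase htE,
            (hEne t htE).symm, hsubB2 s a hsB2 has, hsubB2 s c hsB2 hcs, hbt, hdt⟩
      · rcases hmem t ht with htB2 | htE
        · exact hnc ⟨a, b, c, d, hab, hbc, hcd, s, List.mem_of_mem_erase hsE, B, hBL,
            hEne s hsE, has, hcs, hsubB2 t b htB2 hbt, hsubB2 t d htB2 hdt⟩
        · exact hnc ⟨a, b, c, d, hab, hbc, hcd, s, List.mem_of_mem_erase hsE, t,
            List.mem_of_mem_erase htE, hst, has, hcs, hbt, hdt⟩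
    have hsumB : (L.map Finset.card).sum = B.card + ((L.erase B).map Finset.card).sum := by
      have h5 := ((List.perm_cons_erase hBL).map Finset.card).sum_eq
      simpa using h5
    have hsum₂ : (L₂.map Finset.card).sum = (L.map Finset.card).sum := by
      rw [hL₂]
      simp only [List.map_cons, List.sum_cons, Finset.card_singleton]
      rw [hB'def, Finset.card_erase_of_mem hvB]
      have h6 := h2all B hBL
      omega
    have hLpos : 1 ≤ L.length := by
      cases L with
      | nil => exact absurd hBL (List.not_mem_nil (a := B))
      | cons x xs => simp
    have hlen₂ : L₂.length = L.length + 1 := by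
      rw [hL₂]
      simp only [List.length_cons, List.length_erase_of_mem hBL]
      omega
    have hN₂ : 2 * (L₂.map Finset.card).sum ≤ (N - 1) + L₂.length := by
      rw [hsum₂, hlen₂]; omega
    obtain ⟨l₀, hnd₀, htf₀, heq₀⟩ := IH (N - 1) (by omega) S L₂ hN₂ hd₂ hne₂ hcover₂ hnc₂
    set c := (L.map fwdCycle).prod with hc
    set R := ((L.erase B).map fwdCycle).prod with hR
    set c₂ := (L₂.map fwdCycle).prod with hc₂
    have hpairCommF : (L.map fwdCycle).Pairwise Commute :=
      List.Pairwise.map _ (fun _ _ hab => (disjoint_fwdCycle hab).commute) hd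
    have hcBR : c = fwdCycle B * R := by
      rw [hc, ((List.perm_cons_erase hBL).map fwdCycle).prod_eq' hpairCommF]
      simp [hR]
    have hc₂BR : c₂ = fwdCycle B' * R := by
      rw [hc₂, hL₂]
      simp [fwdCycle_singleton, hR]
    have hudisj : ∀ C ∈ L.erase B, u ∉ C := fun C hC =>
      Finset.disjoint_left.mp (hdisjB C hC) huB
    have hvdisj : ∀ C ∈ L.erase B, v ∉ C := fun C hC =>
      Finset.disjoint_left.mp (hdisjB C hC) hvB
    have hRu : R u = u := prod_fwdCycle_fix hudisj
    have hRv : R v = v := prod_fwdCycle_fix hvdisj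
    have hcommsR : Commute (Equiv.swap u v) R := by
      apply Equiv.Perm.Disjoint.commute
      intro x
      by_cases hx : x = u ∨ x = v
      · rcases hx with rfl | rfl
        · exact Or.inr hRu
        · exact Or.inr hRv
      · push_neg at hx
        exact Or.inl (Equiv.swap_apply_of_ne_of_ne hx.1 hx.2)
    have hceq : c = c₂ * Equiv.swap u v := by
      rw [hcBR, hcB, hc₂BR, mul_assoc, hcommsR.eq, ← mul_assoc]
    have hc₂v : c₂ v = v := by
      rw [hc₂BR]
      simp only [Equiv.Perm.mul_apply]
      rw [hRv, fwdCycle_fix hvB']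
    have hc₂invv : c₂⁻¹ v = v := Equiv.Perm.inv_eq_iff_eq.mpr hc₂v.symm
    set p := c₂⁻¹ u with hp
    have hq : (fwdCycle B')⁻¹ u ∈ B' := fwdCycle_inv_mem huB'
    have hpB' : p ∈ B' := by
      rw [hp, hc₂BR, mul_inv_rev, Equiv.Perm.mul_apply,
        prod_fwdCycle_inv_fix (fun C hC => Finset.disjoint_left.mp (hdisjB C hC) (hB'B hq))]
      exact hq
    have hpv : p ≠ v := fun h => hvB' (h ▸ hpB')
    have hswapconj : c₂⁻¹ * Equiv.swap u v * c₂ = Equiv.swap p v := by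
      have h7 := Equiv.swap_apply_apply c₂⁻¹ u v
      rw [hc₂invv, inv_inv] at h7
      rw [← hp] at h7
      exact h7.symm
    have hsq := prod_sq_eq L hd
    have hsq₂ := prod_sq_eq L₂ hd₂
    rw [← hc₂] at hsq₂
    rw [hsq₂] at heq₀
    rw [← hc] at hsq
    have hG : (L.map fun s => (fwdCycle s)⁻¹ * (fwdCycle s)⁻¹).prod * fwdCycle S
        = Equiv.swap u v * (Equiv.swap p v * l₀.formPerm) := by
      rw [hsq, ← heq₀, hceq, mul_inv_rev, Equiv.swap_inv, ← hswapconj]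
      group
    by_cases hpu : p = u
    · refine ⟨l₀, hnd₀, htf₀, ?_⟩
      rw [hG, hpu, ← mul_assoc, Equiv.swap_mul_self, one_mul]
    -- p ≠ u : cycle surgery
    have hfSuv : fwdCycle S u = v := by
      show (S.sort (· ≤ ·)).formPerm u = v
      rw [hsS]
      have h8 : u ∉ ysS := by
        rw [List.nodup_append, List.nodup_cons, List.nodup_cons] at hndS
        exact fun h => hndS.2.1.1 (List.mem_cons_of_mem v h)
      have h9 : v ∉ xsS := by
        rw [List.nodup_append] at hndS
        exact fun h => hndS.2.2 _ h _ (List.mem_cons_of_mem u List.mem_cons_self) rfl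
      exact formPerm_apply_mid u v xsS ysS huvne h8 h9
    have hg₂u : l₀.formPerm u = v := by
      rw [← heq₀]
      simp only [Equiv.Perm.mul_apply]
      rw [hfSuv, hc₂invv, hc₂invv]
    have hvl₀ : v ∈ l₀ := by rw [← List.mem_toFinset, htf₀]; exact hBS v hvB
    obtain ⟨t, hrot, hpermt⟩ := exists_rotate_head hvl₀ hnd₀
    have hndvt : (v :: t).Nodup := hpermt.nodup_iff.mpr hnd₀
    have hut : u ∈ t := by
      have h10 : u ∈ v :: t := hpermt.mem_iff.mpr
        (by rw [← List.mem_toFinset, htf₀]; exact hBS u huB)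
      rcases List.mem_cons.mp h10 with h | h
      · exact absurd h huvne
      · exact h
    obtain ⟨t₁, t₂, rfl⟩ := List.append_of_mem hut
    have ht₂ : t₂ = [] := by
      cases t₂ with
      | nil => rfl
      | cons w t₂' =>
        exfalso
        have hndt : (t₁ ++ u :: w :: t₂').Nodup := (List.nodup_cons.mp hndvt).2
        have hvt : v ∉ t₁ ++ u :: w :: t₂' := (List.nodup_cons.mp hndvt).1
        rw [List.nodup_append, List.nodup_cons, List.nodup_cons] at hndt
        have huw : u ≠ w := fun h => hndt.2.1.1 (h ▸ List.mem_cons_self (a := w) (l := t₂'))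
        have hu₂ : u ∉ t₂' := fun h => hndt.2.1.1 (List.mem_cons_of_mem w h)
        have hwvt₁ : w ∉ v :: t₁ := by
          intro h
          rcases List.mem_cons.mp h with rfl | h'
          · exact hvt (List.mem_append_right t₁
              (List.mem_cons_of_mem u (List.mem_cons_self (a := w) (l := t₂'))))
          · exact hndt.2.2 _ h' _ (List.mem_cons_of_mem u List.mem_cons_self) rfl
        have h9 : (v :: (t₁ ++ u :: w :: t₂')).formPerm u = w := by
          have h10 := formPerm_apply_mid u w (v :: t₁) t₂' huw hu₂ hwvt₁
          simpa using h10
        rw [← hrot, hg₂u] at h9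
        exact hwvt₁ (h9 ▸ List.mem_cons_self (a := v) (l := t₁))
    subst ht₂
    have hpS : p ∈ S := hBS p (hB'B hpB')
    have hpt₁ : p ∈ t₁ := by
      have h10 : p ∈ v :: (t₁ ++ [u]) := hpermt.mem_iff.mpr
        (by rw [← List.mem_toFinset, htf₀]; exact hpS)
      rcases List.mem_cons.mp h10 with h | h
      · exact absurd h hpv
      rcases List.mem_append.mp h with h' | h'
      · exact h'
      · rw [List.mem_singleton] at h'
        exact absurd h' hpu
    obtain ⟨m₁, m₂, rfl⟩ := List.append_of_mem hpt₁
    have hndt : ((m₁ ++ p :: m₂) ++ [u]).Nodup := (List.nodup_cons.mp hndvt).2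
    have hv_not : v ∉ (m₁ ++ p :: m₂) ++ [u] := (List.nodup_cons.mp hndvt).1
    obtain ⟨hnd_mp, hnd_u, hdisj_u⟩ := List.nodup_append.mp hndt
    obtain ⟨hnd_m₁, hnd_pm₂, hdisj_mp⟩ := List.nodup_append.mp hnd_mp
    have hp_m₁ : p ∉ m₁ := fun h => hdisj_mp _ h _ List.mem_cons_self rfl
    have hu_m₁ : u ∉ m₁ := fun h =>
      hdisj_u _ (List.mem_append_left _ h) _ (List.mem_singleton_self u) rfl
    have hu_pm₂ : u ∉ p :: m₂ := fun h =>
      hdisj_u _ (List.mem_append_right _ h) _ (List.mem_singleton_self u) rfl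
    have hnd_upm : (u :: p :: m₂).Nodup := List.nodup_cons.mpr ⟨hu_pm₂, hnd_pm₂⟩
    have hvu : v ≠ u := huvne.symm
    have hvp : v ≠ p := hpv.symm
    have hshape : (v :: ((m₁ ++ p :: m₂) ++ [u])) = v :: (m₁ ++ p :: (m₂ ++ [u])) := by
      simp
    have hstep1 : Equiv.swap v p * (v :: (m₁ ++ p :: (m₂ ++ [u]))).formPerm
        = (v :: m₁).formPerm * (p :: (m₂ ++ [u])).formPerm :=
      swap_mul_formPerm_append v p m₁ (m₂ ++ [u]) hvp hp_m₁
    have hstep2 : (p :: (m₂ ++ [u])).formPerm = (u :: p :: m₂).formPerm := by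
      have h11 := rotate_one_formPerm (u := u) (p := p) (m := m₂) hnd_upm
      simpa using h11
    have hstep3 : Equiv.swap v u * (v :: (m₁ ++ u :: p :: m₂)).formPerm
        = (v :: m₁).formPerm * (u :: p :: m₂).formPerm := by
      have h11 := swap_mul_formPerm_append v u m₁ (p :: m₂) hvu hu_m₁
      simpa using h11
    refine ⟨v :: (m₁ ++ u :: p :: m₂), ?_, ?_, ?_⟩
    · have hpermfin : (v :: (m₁ ++ u :: p :: m₂)).Perm (v :: ((m₁ ++ p :: m₂) ++ [u])) := by
        apply List.Perm.cons
        calc m₁ ++ u :: p :: m₂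
            ~ m₁ ++ ((p :: m₂) ++ [u]) := List.Perm.append_left m₁
              (List.perm_append_singleton u (p :: m₂)).symm
          _ = (m₁ ++ p :: m₂) ++ [u] := by simp
      exact hpermfin.nodup_iff.mpr hndvt
    · have hpermfin : (v :: (m₁ ++ u :: p :: m₂)).Perm l₀ := by
        refine List.Perm.trans ?_ hpermt
        apply List.Perm.cons
        calc m₁ ++ u :: p :: m₂
            ~ m₁ ++ ((p :: m₂) ++ [u]) := List.Perm.append_left m₁
              (List.perm_append_singleton u (p :: m₂)).symm
          _ = (m₁ ++ p :: m₂) ++ [u] := by simp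
      rw [perm_toFinset hpermfin, htf₀]
    · rw [hG, hrot, hshape, show Equiv.swap p v = Equiv.swap v p from Equiv.swap_comm p v,
        hstep1, hstep2, ← hstep3, ← mul_assoc,
        show Equiv.swap u v = Equiv.swap v u from Equiv.swap_comm u v, Equiv.swap_mul_self,
        one_mul]

end AuxHelp

theorem stmt8 (n k : ℕ) (hk : k ≤ n) (L : List (Finset (Fin n)))
    (hdisj : L.Pairwise Disjoint) (hne : ∀ s ∈ L, s.Nonempty)
    (hcover : ∀ i : Fin n, i.val < k ↔ ∃ s ∈ L, i ∈ s)
    (hnc : NoncrossingList L) :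
    ∀ i j : Fin n, i.val < k → j.val < k →
      ∃ m : ℕ,
        (((L.map (fun s => (fwdCycle s)⁻¹ * (fwdCycle s)⁻¹)).prod *
          fwdCycle ((Finset.univ : Finset (Fin n)).filter (fun i => i.val < k))) ^ m) i = j := by
  intro i j hi hj
  have hcover' : ∀ x : Fin n,
      x ∈ (Finset.univ : Finset (Fin n)).filter (fun i => i.val < k) ↔ ∃ s ∈ L, x ∈ s := by
    intro x
    rw [Finset.mem_filter]
    simp only [Finset.mem_univ, true_and]
    exact hcover x
  obtain ⟨l, hnd, htf, heq⟩ := main_lemma (2 * (L.map Finset.card).sum)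
    ((Finset.univ : Finset (Fin n)).filter (fun i => i.val < k)) L
    (Nat.le_add_right _ _) hdisj hne hcover' hnc
  rw [heq]
  have hi' : i ∈ l := by
    rw [← List.mem_toFinset, htf, Finset.mem_filter]
    exact ⟨Finset.mem_univ i, hi⟩
  have hj' : j ∈ l := by
    rw [← List.mem_toFinset, htf, Finset.mem_filter]
    exact ⟨Finset.mem_univ j, hj⟩
  have hsc : l.formPerm.SameCycle i j := (hnd.isCycleOn_formPerm).2 hi' hj'
  obtain ⟨m, _, hme⟩ := hsc.exists_pow_eq'
  exact ⟨m, hme⟩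
end

section
/- Let p_mu in S(n) be the canonical permutation of ordered cycle type mu (cyclically permuting the first mu_1 integers, then the next mu_2 integers, etc., each in increasing order), and let c be a midpoint of e and p_mu. Then c^{-1} c^∨ = c^{-2} p_mu has the same ordered cycle type and the same sequence of cycle minima as p_mu. -/
open Equiv

namespace Stmt9Aux
open Equiv Equiv.Perm Relation

variable {n : ℕ}

/-- The set of minima of classes of a relation. -/
noncomputable def minsSet (S : Fin n → Fin n → Prop) : Finset (Fin n) :=
  @Finset.filter _ (fun i => ∀ j, S i j → i ≤ j) (Classical.decPred _) Finset.univ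

lemma mem_minsSet {S : Fin n → Fin n → Prop} {i : Fin n} :
    i ∈ minsSet S ↔ ∀ j, S i j → i ≤ j := by
  classical
  simp [minsSet]

lemma minsSet_anti {S T : Fin n → Fin n → Prop} (h : ∀ i j, S i j → T i j) :
    minsSet T ⊆ minsSet S := by
  intro i hi
  rw [mem_minsSet] at hi ⊢
  exact fun j hj => hi j (h _ _ hj)

lemma exists_min {S : Fin n → Fin n → Prop} (hS : Equivalence S) (i : Fin n) :
    ∃ m, S i m ∧ m ∈ minsSet S := by
  classical
  have hne : (Finset.univ.filter (S i)).Nonempty := ⟨i, by simp [hS.refl i]⟩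
  refine ⟨(Finset.univ.filter (S i)).min' hne, ?_, ?_⟩
  · have := (Finset.univ.filter (S i)).min'_mem hne
    simpa using this
  · rw [mem_minsSet]
    intro j hj
    have hmem := (Finset.univ.filter (S i)).min'_mem hne
    have hSim : S i ((Finset.univ.filter (S i)).min' hne) := by simpa using hmem
    have : S i j := hS.trans hSim hj
    exact Finset.min'_le _ _ (by simpa using this)

/-- If S ⊆ T (equivalences) and every S-class-min is a T-class-min, then T ⊆ S. -/
lemma rel_eq_of_minsSet_subset {S T : Fin n → Fin n → Prop} (hS : Equivalence S)
    (hT : Equivalence T) (hST : ∀ i j, S i j → T i j) (h : minsSet S ⊆ minsSet T) :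
    ∀ i j, T i j → S i j := by
  intro i j hij
  obtain ⟨a, hia, ha⟩ := exists_min hS i
  obtain ⟨b, hjb, hb⟩ := exists_min hS j
  have hab : T a b := hT.trans (hT.symm (hST _ _ hia)) (hT.trans hij (hST _ _ hjb))
  have ha' := (mem_minsSet.1 (h ha))
  have hb' := (mem_minsSet.1 (h hb))
  have h1 : a ≤ b := ha' b hab
  have h2 : b ≤ a := hb' a (hT.symm hab)
  have : a = b := le_antisymm h1 h2
  subst this
  exact hS.trans hia (hS.symm hjb)

/-- adjoin an edge (a,b) to an equivalence relation -/
def extRel (S : Fin n → Fin n → Prop) (a b : Fin n) : Fin n → Fin n → Prop :=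
  fun i j => S i j ∨ (S i a ∧ S b j) ∨ (S i b ∧ S a j)

lemma extRel_equivalence {S : Fin n → Fin n → Prop} (hS : Equivalence S) (a b : Fin n) :
    Equivalence (extRel S a b) := by
  constructor
  · exact fun x => Or.inl (hS.refl x)
  · rintro x y (h | ⟨h1, h2⟩ | ⟨h1, h2⟩)
    · exact Or.inl (hS.symm h)
    · exact Or.inr (Or.inr ⟨hS.symm h2, hS.symm h1⟩)
    · exact Or.inr (Or.inl ⟨hS.symm h2, hS.symm h1⟩)
  · rintro x y z (h | ⟨h1, h2⟩ | ⟨h1, h2⟩) (g | ⟨g1, g2⟩ | ⟨g1, g2⟩)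
    · exact Or.inl (hS.trans h g)
    · exact Or.inr (Or.inl ⟨hS.trans h g1, g2⟩)
    · exact Or.inr (Or.inr ⟨hS.trans h g1, g2⟩)
    · exact Or.inr (Or.inl ⟨h1, hS.trans h2 g⟩)
    · exact Or.inr (Or.inl ⟨h1, g2⟩)
    · exact Or.inl (hS.trans h1 g2)
    · exact Or.inr (Or.inr ⟨h1, hS.trans h2 g⟩)
    · exact Or.inl (hS.trans h1 g2)
    · exact Or.inr (Or.inr ⟨h1, g2⟩)

lemma le_of_mem_minsSet {S : Fin n → Fin n → Prop} {i j : Fin n}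
    (hi : i ∈ minsSet S) (h : S i j) : i ≤ j := mem_minsSet.1 hi j h

/-- The number of class-minima decreases by at most 1 when adjoining an edge. -/
lemma card_minsSet_ext {S : Fin n → Fin n → Prop} (hS : Equivalence S) (a b : Fin n) :
    (minsSet S).card ≤ (minsSet (extRel S a b)).card + 1 := by
  obtain ⟨a', haa, ha⟩ := exists_min hS a
  obtain ⟨b', hbb, hb⟩ := exists_min hS b
  have hsub : minsSet S ⊆ insert (max a' b') (minsSet (extRel S a b)) := by
    intro i hi
    by_cases him : i = max a' b'
    · simp [him]
    · refine Finset.mem_insert_of_mem ?_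
      rw [mem_minsSet]
      rintro j (h | ⟨h1, h2⟩ | ⟨h1, h2⟩)
      · exact le_of_mem_minsSet hi h
      · -- i ~ a, b ~ j : i is the min of a's class, i.e. i = a' (as both are minima)
        have hia' : i = a' := le_antisymm
          (le_of_mem_minsSet hi (hS.trans h1 haa))
          (le_of_mem_minsSet ha (hS.trans (hS.symm haa) (hS.symm h1)))
        -- since i ≠ max a' b', we must have a' ≤ b' fails... : a' < b' is impossible? 
        -- max a' b' ≠ a' means a' < b'??? We want: i ≤ j. j is in b's class so b' ≤ j.
        -- suffices a' ≤ b'. If b' ≤ a' then max = a' = i, contradiction.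
        have hb'j : b' ≤ j := le_of_mem_minsSet hb (hS.trans (hS.symm hbb) h2)
        have ha'b' : a' ≤ b' := by
          by_contra hcon
          push_neg at hcon
          have : max a' b' = a' := max_eq_left (le_of_lt hcon)
          exact him (hia'.trans this.symm)
        calc i = a' := hia'
          _ ≤ b' := ha'b'
          _ ≤ j := hb'j
      · have hib' : i = b' := le_antisymm
          (le_of_mem_minsSet hi (hS.trans h1 hbb))
          (le_of_mem_minsSet hb (hS.trans (hS.symm hbb) (hS.symm h1)))
        have ha'j : a' ≤ j := le_of_mem_minsSet ha (hS.trans (hS.symm haa) h2)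
        have hb'a' : b' ≤ a' := by
          by_contra hcon
          push_neg at hcon
          have : max a' b' = b' := max_eq_right (le_of_lt hcon)
          exact him (hib'.trans this.symm)
        calc i = b' := hib'
          _ ≤ a' := hb'a'
          _ ≤ j := ha'j
  calc (minsSet S).card ≤ (insert (max a' b') (minsSet (extRel S a b))).card :=
        Finset.card_le_card hsub
    _ ≤ (minsSet (extRel S a b)).card + 1 := Finset.card_insert_le _ _

/-- If T is an equivalence relating each i to q i, then T contains SameCycle q. -/
lemma sameCycle_subset_of_step {T : Fin n → Fin n → Prop} (hT : Equivalence T)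
    {q : Perm (Fin n)} (h : ∀ i, T i (q i)) : ∀ i j, q.SameCycle i j → T i j := by
  have h' : ∀ i, T i (q⁻¹ i) := by
    intro i
    have := h (q⁻¹ i)
    rw [show q (q⁻¹ i) = i from q.apply_symm_apply i] at this
    exact hT.symm this
  have hp : ∀ (m : ℕ) (i : Fin n), T i ((q ^ m) i) := by
    intro m
    induction m with
    | zero => intro i; simpa using hT.refl i
    | succ k ih =>
        intro i
        have : (q ^ (k + 1)) i = (q ^ k) (q i) := by
          rw [pow_succ]; rfl
        rw [this]
        exact hT.trans (h i) (ih (q i))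
  have hpInv : ∀ (m : ℕ) (i : Fin n), T i ((q⁻¹ ^ m) i) := by
    intro m
    induction m with
    | zero => intro i; simpa using hT.refl i
    | succ k ih =>
        intro i
        have : (q⁻¹ ^ (k + 1)) i = (q⁻¹ ^ k) (q⁻¹ i) := by
          rw [pow_succ]; rfl
        rw [this]
        exact hT.trans (h' i) (ih (q⁻¹ i))
  rintro i j ⟨z, hz⟩
  cases z with
  | ofNat m =>
      rw [Int.ofNat_eq_coe, zpow_natCast] at hz
      rw [← hz]; exact hp m i
  | negSucc m =>
      rw [zpow_negSucc, ← inv_pow] at hz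
      rw [← hz]; exact hpInv (m + 1) i

lemma sameCycle_equivalence (q : Perm (Fin n)) : Equivalence q.SameCycle :=
  ⟨SameCycle.refl q, SameCycle.symm, SameCycle.trans⟩

/-- SameCycle (swap a b * p) is contained in extRel (SameCycle p) a b. -/
lemma sameCycle_swap_mul_subset {a b : Fin n} (p : Perm (Fin n)) :
    ∀ i j, (Equiv.swap a b * p).SameCycle i j → extRel p.SameCycle a b i j := by
  apply sameCycle_subset_of_step (extRel_equivalence (sameCycle_equivalence p) a b)
  intro i
  have happ : (Equiv.swap a b * p) i = Equiv.swap a b (p i) := rfl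
  by_cases h1 : p i = a
  · rw [happ, h1, Equiv.swap_apply_left]
    exact Or.inr (Or.inl ⟨h1 ▸ SameCycle.apply_right (SameCycle.refl p i),
      SameCycle.refl p b⟩)
  · by_cases h2 : p i = b
    · rw [happ, h2, Equiv.swap_apply_right]
      exact Or.inr (Or.inr ⟨h2 ▸ SameCycle.apply_right (SameCycle.refl p i),
        SameCycle.refl p a⟩)
    · rw [happ, Equiv.swap_apply_of_ne_of_ne h1 h2]
      exact Or.inl (SameCycle.apply_right (SameCycle.refl p i))

/-- cyc (swap a b * p) ≥ cyc p - 1. -/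
lemma card_minsSet_swap_mul_ge (a b : Fin n) (p : Perm (Fin n)) :
    (minsSet p.SameCycle).card ≤ (minsSet (Equiv.swap a b * p).SameCycle).card + 1 := by
  have h1 := card_minsSet_ext (sameCycle_equivalence p) a b
  have h2 : minsSet (extRel p.SameCycle a b) ⊆ minsSet (Equiv.swap a b * p).SameCycle :=
    minsSet_anti (sameCycle_swap_mul_subset p)
  exact h1.trans (Nat.add_le_add_right (Finset.card_le_card h2) 1)

/-- cyc (swap a b * p) ≤ cyc p + 1. -/
lemma card_minsSet_swap_mul_le (a b : Fin n) (p : Perm (Fin n)) :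
    (minsSet (Equiv.swap a b * p).SameCycle).card ≤ (minsSet p.SameCycle).card + 1 := by
  have := card_minsSet_swap_mul_ge a b (Equiv.swap a b * p)
  rwa [← mul_assoc, Equiv.swap_mul_self, one_mul] at this
/-- The merge lemma: if a,b lie in different cycles of p, then swap a b * p merges them. -/
lemma merge_sameCycle {a b : Fin n} (p : Perm (Fin n)) (hnab : ¬ p.SameCycle a b) :
    (Equiv.swap a b * p).SameCycle b a := by
  set q := Equiv.swap a b * p with hq
  have hqapp : ∀ i, q i = Equiv.swap a b (p i) := fun i => rfl
  have hex : ∃ j, 0 < j ∧ (p ^ j) b = b := by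
    refine ⟨orderOf p, orderOf_pos p, ?_⟩
    rw [pow_orderOf_eq_one]; rfl
  obtain ⟨kpos, hpk⟩ := Nat.find_spec hex
  have claim : ∀ j, j < Nat.find hex → (q ^ j) b = (p ^ j) b := by
    intro j
    induction j with
    | zero => intro _; rfl
    | succ m ih =>
        intro hm
        have hmk : m < Nat.find hex := Nat.lt_of_succ_lt hm
        have h1 : (q ^ (m + 1)) b = q ((q ^ m) b) := by
          rw [pow_succ']; rfl
        have h2 : (p ^ (m + 1)) b = p ((p ^ m) b) := by
          rw [pow_succ']; rfl
        rw [h1, ih hmk, hqapp, ← h2]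
        have hna : (p ^ (m + 1)) b ≠ a := by
          intro hcon
          exact hnab (SameCycle.symm ⟨(m + 1 : ℕ), by rw [zpow_natCast]; exact hcon⟩)
        have hnb : (p ^ (m + 1)) b ≠ b := by
          intro hcon
          exact (Nat.find_min hex hm) ⟨Nat.succ_pos m, hcon⟩
        exact Equiv.swap_apply_of_ne_of_ne hna hnb
  obtain ⟨m, hm⟩ : ∃ m, Nat.find hex = m + 1 :=
    ⟨Nat.find hex - 1, (Nat.succ_pred_eq_of_pos kpos).symm⟩
  have hfin : (q ^ (m + 1)) b = a := by
    have h1 : (q ^ (m + 1)) b = q ((q ^ m) b) := by rw [pow_succ']; rfl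
    have h2 : (p ^ (m + 1)) b = p ((p ^ m) b) := by rw [pow_succ']; rfl
    have hpk' : (p ^ (m + 1)) b = b := by rw [← hm]; exact hpk
    rw [h1, claim m (by omega), hqapp, ← h2, hpk', Equiv.swap_apply_right]
  exact ⟨(m + 1 : ℕ), by rw [zpow_natCast]; exact hfin⟩

lemma merge_subset {a b : Fin n} (p : Perm (Fin n)) (hnab : ¬ p.SameCycle a b) :
    ∀ i j, p.SameCycle i j → (Equiv.swap a b * p).SameCycle i j := by
  set q := Equiv.swap a b * p with hq
  have hba : q.SameCycle b a := merge_sameCycle p hnab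
  apply sameCycle_subset_of_step (sameCycle_equivalence q)
  intro i
  have hqapp : q i = Equiv.swap a b (p i) := rfl
  have hstep : q.SameCycle i (q i) := ⟨1, by simp⟩
  by_cases h1 : p i = a
  · rw [h1]
    have : q i = b := by rw [hqapp, h1, Equiv.swap_apply_left]
    exact (this ▸ hstep).trans hba
  · by_cases h2 : p i = b
    · rw [h2]
      have : q i = a := by rw [hqapp, h2, Equiv.swap_apply_right]
      exact (this ▸ hstep).trans hba.symm
    · have : q i = p i := by rw [hqapp, Equiv.swap_apply_of_ne_of_ne h1 h2]
      exact this ▸ hstep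

/-- Merging two distinct cycles strictly decreases the cycle count. -/
lemma card_minsSet_merge {a b : Fin n} (p : Perm (Fin n)) (hnab : ¬ p.SameCycle a b) :
    (minsSet (Equiv.swap a b * p).SameCycle).card + 1 ≤ (minsSet p.SameCycle).card := by
  set q := Equiv.swap a b * p with hq
  have hS := sameCycle_equivalence p
  have hsub : minsSet q.SameCycle ⊆ minsSet p.SameCycle :=
    minsSet_anti (merge_subset p hnab)
  obtain ⟨a', haa, ha⟩ := exists_min hS a
  obtain ⟨b', hbb, hb⟩ := exists_min hS b
  have hne : a' ≠ b' := by
    intro hcon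
    exact hnab (haa.trans (hcon ▸ hbb.symm))
  have hqab : q.SameCycle a' b' :=
    ((merge_subset p hnab _ _ haa.symm).trans (merge_sameCycle p hnab).symm).trans
      (merge_subset p hnab _ _ hbb)
  have hmnot : max a' b' ∉ minsSet q.SameCycle := by
    rw [mem_minsSet]
    push_neg
    rcases le_total a' b' with h | h
    · refine ⟨a', ?_, ?_⟩
      · rw [max_eq_right h]; exact hqab.symm
      · rw [max_eq_right h]; exact lt_of_le_of_ne h hne
    · refine ⟨b', ?_, ?_⟩
      · rw [max_eq_left h]; exact hqab
      · rw [max_eq_left h]; exact lt_of_le_of_ne h (Ne.symm hne)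
  have hmin : max a' b' ∈ minsSet p.SameCycle := by
    rcases le_total a' b' with h | h
    · rw [max_eq_right h]; exact hb
    · rw [max_eq_left h]; exact ha
  have : minsSet q.SameCycle ⊂ minsSet p.SameCycle :=
    ⟨hsub, fun hcon => hmnot (hcon hmin)⟩
  exact Finset.card_lt_card this
/-- The connectivity relation generated by a list of permutations. -/
def connRel (L : List (Perm (Fin n))) : Fin n → Fin n → Prop :=
  EqvGen (fun i j => ∃ t ∈ L, t i = j)

lemma connRel_equivalence (L : List (Perm (Fin n))) : Equivalence (connRel L) :=
  EqvGen.is_equivalence _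

lemma eqvGen_le {α : Type*} {r T : α → α → Prop} (hT : Equivalence T)
    (h : ∀ a b, r a b → T a b) : ∀ a b, EqvGen r a b → T a b := by
  intro a b hab
  induction hab with
  | rel x y hxy => exact h x y hxy
  | refl x => exact hT.refl x
  | symm x y _ ih => exact hT.symm ih
  | trans x y z _ _ ih1 ih2 => exact hT.trans ih1 ih2

lemma connRel_mono {L L' : List (Perm (Fin n))} (h : ∀ t ∈ L, t ∈ L') :
    ∀ i j, connRel L i j → connRel L' i j := by
  intro i j
  exact EqvGen.mono (r := fun i j => ∃ t ∈ L, t i = j) (p := fun i j => ∃ t ∈ L', t i = j)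
    (fun a b ⟨t, ht, hab⟩ => ⟨t, h t ht, hab⟩) i j

lemma connRel_prod (L : List (Perm (Fin n))) : ∀ i, connRel L i (L.prod i) := by
  induction L with
  | nil => intro i; simpa using (connRel_equivalence []).refl i
  | cons t L' ih =>
      intro i
      have h1 : (t :: L').prod i = t (L'.prod i) := by
        rw [List.prod_cons]; rfl
      rw [h1]
      refine (connRel_equivalence _).trans
        (connRel_mono (fun s hs => List.mem_cons_of_mem t hs) i _ (ih i)) ?_
      exact EqvGen.rel _ _ ⟨t, List.mem_cons_self, rfl⟩

lemma sameCycle_subset_connRel (L : List (Perm (Fin n))) :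
    ∀ i j, (L.prod).SameCycle i j → connRel L i j :=
  sameCycle_subset_of_step (connRel_equivalence L) (connRel_prod L)

lemma connRel_cons_subset_ext (a b : Fin n) (L' : List (Perm (Fin n))) :
    ∀ i j, connRel (Equiv.swap a b :: L') i j → extRel (connRel L') a b i j := by
  apply eqvGen_le (extRel_equivalence (connRel_equivalence L') a b)
  rintro i j ⟨t, ht, hij⟩
  rcases List.mem_cons.1 ht with rfl | ht'
  · by_cases h1 : i = a
    · subst h1
      rw [Equiv.swap_apply_left] at hij
      subst hij
      exact Or.inr (Or.inl ⟨(connRel_equivalence L').refl _, (connRel_equivalence L').refl _⟩)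
    · by_cases h2 : i = b
      · subst h2
        rw [Equiv.swap_apply_right] at hij
        subst hij
        exact Or.inr (Or.inr ⟨(connRel_equivalence L').refl _, (connRel_equivalence L').refl _⟩)
      · rw [Equiv.swap_apply_of_ne_of_ne h1 h2] at hij
        subst hij
        exact Or.inl ((connRel_equivalence L').refl _)
  · exact Or.inl (EqvGen.rel _ _ ⟨t, ht', hij⟩)

lemma card_minsSet_connRel_cons (a b : Fin n) (L' : List (Perm (Fin n))) :
    (minsSet (connRel L')).card ≤ (minsSet (connRel (Equiv.swap a b :: L'))).card + 1 := by
  have h1 := card_minsSet_ext (connRel_equivalence L') a b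
  have h2 : minsSet (extRel (connRel L') a b) ⊆ minsSet (connRel (Equiv.swap a b :: L')) :=
    minsSet_anti (connRel_cons_subset_ext a b L')
  exact h1.trans (Nat.add_le_add_right (Finset.card_le_card h2) 1)

lemma connRel_cons_subset_of_rel {a b : Fin n} {L' : List (Perm (Fin n))}
    (hab : connRel L' a b) :
    ∀ i j, connRel (Equiv.swap a b :: L') i j → connRel L' i j := by
  apply eqvGen_le (connRel_equivalence L')
  rintro i j ⟨t, ht, hij⟩
  rcases List.mem_cons.1 ht with rfl | ht'
  · by_cases h1 : i = a
    · subst h1; rw [Equiv.swap_apply_left] at hij; subst hij; exact hab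
    · by_cases h2 : i = b
      · subst h2; rw [Equiv.swap_apply_right] at hij; subst hij
        exact (connRel_equivalence L').symm hab
      · rw [Equiv.swap_apply_of_ne_of_ne h1 h2] at hij; subst hij
        exact (connRel_equivalence L').refl i
  · exact EqvGen.rel _ _ ⟨t, ht', hij⟩

lemma card_minsSet_one : (minsSet (1 : Perm (Fin n)).SameCycle).card = n := by
  have : minsSet (1 : Perm (Fin n)).SameCycle = Finset.univ := by
    apply Finset.eq_univ_of_forall
    intro i
    rw [mem_minsSet]
    intro j hj
    rw [Perm.sameCycle_one] at hj
    exact hj.le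
  rw [this, Finset.card_univ, Fintype.card_fin]

lemma card_minsSet_connRel_nil : (minsSet (connRel ([] : List (Perm (Fin n))))).card = n := by
  have hsub : ∀ i j, connRel ([] : List (Perm (Fin n))) i j → i = j := by
    apply eqvGen_le eq_equivalence
    rintro i j ⟨t, ht, -⟩
    exact absurd ht List.not_mem_nil
  have : minsSet (connRel ([] : List (Perm (Fin n)))) = Finset.univ := by
    apply Finset.eq_univ_of_forall
    intro i
    rw [mem_minsSet]
    intro j hj
    exact (hsub i j hj).le
  rw [this, Finset.card_univ, Fintype.card_fin]

/-- The Hurwitz / genus bound. -/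
lemma hurwitz (L : List (Perm (Fin n))) (hL : ∀ t ∈ L, t.IsSwap) :
    n + (minsSet (L.prod).SameCycle).card ≤ L.length + 2 * (minsSet (connRel L)).card := by
  induction L with
  | nil =>
      simp only [List.prod_nil, List.length_nil, card_minsSet_one, card_minsSet_connRel_nil]
      omega
  | cons t L' ih =>
      obtain ⟨a, b, hab, rfl⟩ := hL t (List.mem_cons_self)
      have ih' := ih (fun s hs => hL s (List.mem_cons_of_mem _ hs))
      have hprod : (Equiv.swap a b :: L').prod = Equiv.swap a b * L'.prod := List.prod_cons
      rw [hprod, List.length_cons]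
      by_cases hS : (L'.prod).SameCycle a b
      · have hcc : minsSet (connRel L') ⊆ minsSet (connRel (Equiv.swap a b :: L')) :=
          minsSet_anti (connRel_cons_subset_of_rel (sameCycle_subset_connRel L' a b hS))
        have h1 := Finset.card_le_card hcc
        have h2 := card_minsSet_swap_mul_le a b L'.prod
        omega
      · have h1 := card_minsSet_merge L'.prod hS
        have h2 := card_minsSet_connRel_cons a b L'
        omega

/-- lower bound : any factorization into swaps has length ≥ n - cyc. -/
lemma length_ge (L : List (Perm (Fin n))) (hL : ∀ t ∈ L, t.IsSwap) :
    n ≤ L.length + (minsSet (L.prod).SameCycle).card := by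
  induction L with
  | nil => simp [card_minsSet_one]
  | cons t L' ih =>
      obtain ⟨a, b, hab, rfl⟩ := hL t (List.mem_cons_self)
      have ih' := ih (fun s hs => hL s (List.mem_cons_of_mem _ hs))
      have h1 := card_minsSet_swap_mul_ge a b L'.prod
      rw [List.prod_cons, List.length_cons]
      omega

lemma eq_one_of_card_minsSet (x : Perm (Fin n))
    (h : n ≤ (minsSet x.SameCycle).card) : x = 1 := by
  have huniv : minsSet x.SameCycle = Finset.univ := by
    apply Finset.eq_univ_of_card
    have h2 := Finset.card_le_univ (minsSet x.SameCycle)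
    rw [Fintype.card_fin] at h2 ⊢
    omega
  ext i
  have h1 : i ≤ x i := by
    have := mem_minsSet.1 (huniv ▸ Finset.mem_univ i)
    exact this (x i) ⟨1, by simp⟩
  have h2 : x i ≤ i := by
    have := mem_minsSet.1 (huniv ▸ Finset.mem_univ (x i))
    exact this i (SameCycle.symm ⟨1, by simp⟩)
  simpa using le_antisymm (by exact_mod_cast h2) (by exact_mod_cast h1)

/-- upper bound : every permutation factors into exactly n - cyc swaps. -/
lemma exists_factorization (x : Perm (Fin n)) :
    ∃ L : List (Perm (Fin n)), (∀ t ∈ L, t.IsSwap) ∧ L.prod = x ∧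
      L.length + (minsSet x.SameCycle).card = n := by
  have main : ∀ (k : ℕ) (x : Perm (Fin n)), n - (minsSet x.SameCycle).card ≤ k →
      ∃ L : List (Perm (Fin n)), (∀ t ∈ L, t.IsSwap) ∧ L.prod = x ∧
        L.length + (minsSet x.SameCycle).card = n := by
    intro k
    induction k with
    | zero =>
        intro x hx
        have hx1 : x = 1 := eq_one_of_card_minsSet x (by omega)
        subst hx1
        exact ⟨[], by simp, by simp, by simp [card_minsSet_one]⟩
    | succ k ih =>
        intro x hx
        by_cases hx1 : x = 1
        · subst hx1
          exact ⟨[], by simp, by simp, by simp [card_minsSet_one]⟩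
        · obtain ⟨i, hi⟩ : ∃ i, x i ≠ i := by
            by_contra hcon
            push_neg at hcon
            exact hx1 (Equiv.ext fun i => by simpa using hcon i)
          set x' := Equiv.swap i (x i) * x with hx'
          have hfix : x' i = i := by
            have : x' i = Equiv.swap i (x i) (x i) := rfl
            rw [this, Equiv.swap_apply_right]
          have hnsc : ¬ x'.SameCycle i (x i) := by
            rintro ⟨z, hz⟩
            rw [Perm.zpow_apply_eq_self_of_apply_eq_self hfix] at hz
            exact hi hz.symm
          have hback : Equiv.swap i (x i) * x' = x := by
            rw [hx', ← mul_assoc, Equiv.swap_mul_self, one_mul]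
          have hmerge := card_minsSet_merge x' hnsc
          rw [hback] at hmerge
          have hle := card_minsSet_swap_mul_le i (x i) x
          rw [← hx'] at hle
          have hcard' : (minsSet x'.SameCycle).card = (minsSet x.SameCycle).card + 1 := by
            omega
          obtain ⟨L', hL'swap, hL'prod, hL'len⟩ := ih x' (by
            have h9 := Finset.card_le_univ (minsSet x'.SameCycle)
            rw [Fintype.card_fin] at h9
            omega)
          refine ⟨Equiv.swap i (x i) :: L', ?_, ?_, ?_⟩
          · rintro t ht
            rcases List.mem_cons.1 ht with rfl | ht'
            · exact ⟨i, x i, Ne.symm hi, rfl⟩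
            · exact hL'swap t ht'
          · rw [List.prod_cons, hL'prod, hback]
          · rw [List.length_cons]
            omega
  exact main (n - (minsSet x.SameCycle).card) x le_rfl
lemma minsSet_congr {S T : Fin n → Fin n → Prop} (h : ∀ i j, S i j ↔ T i j) :
    minsSet S = minsSet T :=
  Finset.Subset.antisymm (minsSet_anti fun i j hij => (h i j).2 hij)
    (minsSet_anti fun i j hij => (h i j).1 hij)

/-- trdist from the identity equals n minus the number of cycles. -/
lemma trdist_one_add_card (y : Perm (Fin n)) :
    trdist 1 y + (minsSet y.SameCycle).card = n := by
  obtain ⟨L, hsw, hprod, hlen⟩ := exists_factorization y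
  have hmem : L.length ∈ {k | ∃ l : List (Perm (Fin n)), l.length = k ∧
      (∀ t ∈ l, t.IsSwap) ∧ l.prod = (1 : Perm (Fin n))⁻¹ * y} :=
    ⟨L, rfl, hsw, by rw [inv_one, one_mul]; exact hprod⟩
  have hlb : ∀ k ∈ {k | ∃ l : List (Perm (Fin n)), l.length = k ∧
      (∀ t ∈ l, t.IsSwap) ∧ l.prod = (1 : Perm (Fin n))⁻¹ * y},
      n ≤ k + (minsSet y.SameCycle).card := by
    rintro k ⟨l, rfl, hsw', hpr⟩
    have := length_ge l hsw'
    rw [hpr, inv_one, one_mul] at this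
    exact this
  have h1 : trdist 1 y ≤ L.length := Nat.sInf_le hmem
  have h2 : n ≤ trdist 1 y + (minsSet y.SameCycle).card :=
    hlb _ (Nat.sInf_mem ⟨L.length, hmem⟩)
  omega

lemma trdist_move (a b : Perm (Fin n)) : trdist a b = trdist 1 (a⁻¹ * b) := by
  simp only [trdist, inv_one, one_mul]

/-- The main lemma: if c is on a geodesic from 1 to p, then c⁻¹ * (c⁻¹ * p) has the same
cycles (as a partition of Fin n) as p. -/
lemma main_rel (p c : Perm (Fin n))
    (hsum : trdist 1 c + trdist 1 (c⁻¹ * p) = trdist 1 p) :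
    (c⁻¹ * (c⁻¹ * p)).SameCycle = p.SameCycle := by
  set v := c⁻¹ * p with hv
  set q := c⁻¹ * v with hqdef
  obtain ⟨Lu, hLu, hLuprod, hLulen⟩ := exists_factorization c
  obtain ⟨Lv, hLv, hLvprod, hLvlen⟩ := exists_factorization v
  have htc := trdist_one_add_card c
  have htv := trdist_one_add_card v
  have htp := trdist_one_add_card p
  set L := Lu ++ Lv with hL
  have hLsw : ∀ t ∈ L, t.IsSwap := by
    intro t ht
    rcases List.mem_append.1 ht with h | h
    · exact hLu t h
    · exact hLv t h
  have hLprod : L.prod = p := by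
    rw [hL, List.prod_append, hLuprod, hLvprod, hv, mul_inv_cancel_left]
  have hLlen : L.length = Lu.length + Lv.length := List.length_append
  have hsub1 : ∀ i j, p.SameCycle i j → connRel L i j := by
    have := sameCycle_subset_connRel L
    rwa [hLprod] at this
  have hms1 : minsSet (connRel L) ⊆ minsSet p.SameCycle := minsSet_anti hsub1
  have hhur := hurwitz L hLsw
  rw [hLprod] at hhur
  have hcardle := Finset.card_le_card hms1
  have hcardeq : (minsSet (connRel L)).card = (minsSet p.SameCycle).card := by omega
  have hmseq1 : minsSet (connRel L) = minsSet p.SameCycle :=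
    Finset.eq_of_subset_of_card_le hms1 (le_of_eq hcardeq.symm)
  -- second list
  set L2 := Lu.reverse ++ Lv with hL2
  have hrevprod : Lu.reverse.prod = c⁻¹ := by
    have h := List.prod_inv_reverse Lu
    rw [hLuprod] at h
    have hmap : List.map (fun x => x⁻¹) Lu = Lu := by
      rw [show Lu = List.map id Lu from (List.map_id Lu).symm]
      simp only [List.map_map]
      apply List.map_congr_left
      intro t ht
      obtain ⟨a, b, hab, rfl⟩ := hLu t (by simpa using ht)
      simp [Equiv.swap_inv]
    rw [hmap] at h
    exact h.symm
  have hL2prod : L2.prod = q := by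
    rw [hL2, List.prod_append, hrevprod, hLvprod]
  have hmemiff : ∀ t : Perm (Fin n), t ∈ L2 ↔ t ∈ L := by
    intro t
    simp [hL2, hL, List.mem_append, List.mem_reverse]
  have hconn2 : ∀ i j, connRel L2 i j ↔ connRel L i j := fun i j =>
    ⟨connRel_mono (fun t ht => (hmemiff t).1 ht) i j,
     connRel_mono (fun t ht => (hmemiff t).2 ht) i j⟩
  have hms2 : minsSet (connRel L2) = minsSet (connRel L) := minsSet_congr hconn2
  have hsw2 : ∀ t ∈ L2, t.IsSwap := fun t ht => hLsw t ((hmemiff t).1 ht)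
  have hhur2 := hurwitz L2 hsw2
  rw [hL2prod] at hhur2
  have hL2len : L2.length = Lu.length + Lv.length := by
    rw [hL2, List.length_append, List.length_reverse]
  have hsubq : ∀ i j, q.SameCycle i j → connRel L i j := by
    intro i j h
    refine (hconn2 i j).1 ?_
    have := sameCycle_subset_connRel L2
    rw [hL2prod] at this
    exact this i j h
  have hmsq : minsSet (connRel L) ⊆ minsSet q.SameCycle := minsSet_anti hsubq
  have hcardq := Finset.card_le_card hmsq
  have hmsqeq : minsSet (connRel L) = minsSet q.SameCycle := by
    refine Finset.eq_of_subset_of_card_le hmsq ?_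
    rw [hms2] at hhur2
    omega
  have h3 : ∀ i j, connRel L i j → p.SameCycle i j :=
    rel_eq_of_minsSet_subset (sameCycle_equivalence p) (connRel_equivalence L) hsub1
      (le_of_eq hmseq1.symm)
  have h4 : ∀ i j, connRel L i j → q.SameCycle i j :=
    rel_eq_of_minsSet_subset (sameCycle_equivalence q) (connRel_equivalence L) hsubq
      (le_of_eq hmsqeq.symm)
  funext i j
  exact propext ⟨fun h => h3 i j (hsubq i j h), fun h => h4 i j (hsub1 i j h)⟩

end Stmt9Aux

theorem stmt9 (n : ℕ) (μ : List ℕ) (hpos : ∀ x ∈ μ, 0 < x) (hsum : μ.sum = n)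
    (c : Equiv.Perm (Fin n)) (hc : c ∈ midpts 1 (canonPerm n μ 0)) :
    orderedCycleType (c⁻¹ * (c⁻¹ * canonPerm n μ 0)) = orderedCycleType (canonPerm n μ 0) ∧
    cycleMins (c⁻¹ * (c⁻¹ * canonPerm n μ 0)) = cycleMins (canonPerm n μ 0) := by
  obtain ⟨h1, -⟩ := hc
  rw [Stmt9Aux.trdist_move c (canonPerm n μ 0)] at h1
  have hEq := Stmt9Aux.main_rel (canonPerm n μ 0) c h1
  constructor
  · unfold orderedCycleType cycleMins
    rw [hEq]
  · unfold cycleMins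
    rw [hEq]
end

section
/- Given two permutations p, p' in S(n) with the same ordered cycle type, there exists a unique permutation u in S(n) that conjugates p into p' (u p u^{-1} = p') and maps the sequence of cycle minima of p to the sequence of cycle minima of p' (entrywise, in order). -/
open Equiv

namespace StmtAux

variable {n : ℕ}

noncomputable def cyc (p : Perm (Fin n)) (x : Fin n) : Finset (Fin n) :=
  @Finset.filter _ (fun j => p.SameCycle x j) (Classical.decPred _) Finset.univ

lemma orderedCycleType_eq (p : Perm (Fin n)) :
    orderedCycleType p = (cycleMins p).map (fun i => (cyc p i).card) := rfl

lemma mem_cyc {p : Perm (Fin n)} {x y : Fin n} : y ∈ cyc p x ↔ p.SameCycle x y := by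
  simp [cyc]

lemma mem_cycleMins {p : Perm (Fin n)} {x : Fin n} :
    x ∈ cycleMins p ↔ ∀ j, p.SameCycle x j → x ≤ j := by
  simp only [cycleMins, Finset.mem_sort, Finset.filter_congr_decidable, Finset.mem_filter,
    Finset.mem_univ, true_and]

lemma nodup_cycleMins (p : Perm (Fin n)) : (cycleMins p).Nodup := Finset.sort_nodup _ _

noncomputable def minOf (p : Perm (Fin n)) (x : Fin n) : Fin n :=
  (cyc p x).min' ⟨x, mem_cyc.2 (Equiv.Perm.SameCycle.refl p x)⟩

lemma sameCycle_minOf (p : Perm (Fin n)) (x : Fin n) : p.SameCycle x (minOf p x) :=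
  mem_cyc.1 (Finset.min'_mem _ _)

lemma minOf_le {p : Perm (Fin n)} {x j : Fin n} (h : p.SameCycle x j) : minOf p x ≤ j :=
  Finset.min'_le _ _ (mem_cyc.2 h)

lemma minOf_eq_of_sameCycle {p : Perm (Fin n)} {x y : Fin n} (h : p.SameCycle x y) :
    minOf p x = minOf p y :=
  le_antisymm (minOf_le (h.trans (sameCycle_minOf p y)))
    (minOf_le (h.symm.trans (sameCycle_minOf p x)))

lemma minOf_mem_cycleMins (p : Perm (Fin n)) (x : Fin n) : minOf p x ∈ cycleMins p := by
  rw [mem_cycleMins]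
  intro j hj
  exact minOf_le ((sameCycle_minOf p x).trans hj)

lemma minOf_eq_self {p : Perm (Fin n)} {x : Fin n} (hx : x ∈ cycleMins p) : minOf p x = x :=
  le_antisymm (minOf_le (Equiv.Perm.SameCycle.refl p x))
    (mem_cycleMins.1 hx _ (sameCycle_minOf p x))

lemma d_pos (p : Perm (Fin n)) (x : Fin n) : 0 < Function.minimalPeriod ⇑p x := by
  have h : Function.IsPeriodicPt ⇑p (orderOf p) x := by
    show p^[orderOf p] x = x
    rw [Equiv.Perm.iterate_eq_pow, pow_orderOf_eq_one]
    rfl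
  exact h.minimalPeriod_pos (orderOf_pos p)

lemma pow_mod_apply (p : Perm (Fin n)) (x : Fin n) (a : ℕ) :
    (p ^ (a % Function.minimalPeriod ⇑p x)) x = (p ^ a) x :=
  Function.iterate_mod_minimalPeriod_eq

lemma pow_apply_eq_of_modEq {p : Perm (Fin n)} {x : Fin n} {a b : ℕ}
    (h : a ≡ b [MOD Function.minimalPeriod ⇑p x]) : (p ^ a) x = (p ^ b) x := by
  rw [← pow_mod_apply p x a, ← pow_mod_apply p x b, h]

lemma modEq_of_pow_apply_eq {p : Perm (Fin n)} {x : Fin n} {a b : ℕ}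
    (h : (p ^ a) x = (p ^ b) x) : a ≡ b [MOD Function.minimalPeriod ⇑p x] := by
  have h2 : (p ^ (a % Function.minimalPeriod ⇑p x)) x
      = (p ^ (b % Function.minimalPeriod ⇑p x)) x := by
    rw [pow_mod_apply, pow_mod_apply, h]
  exact Function.iterate_injOn_Iio_minimalPeriod
    (Set.mem_Iio.2 (Nat.mod_lt _ (d_pos p x))) (Set.mem_Iio.2 (Nat.mod_lt _ (d_pos p x))) h2

lemma card_cyc (p : Perm (Fin n)) (x : Fin n) :
    (cyc p x).card = Function.minimalPeriod ⇑p x := by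
  have himg : cyc p x
      = (Finset.range (Function.minimalPeriod ⇑p x)).image (fun k => (p ^ k) x) := by
    ext y
    simp only [mem_cyc, Finset.mem_image, Finset.mem_range]
    constructor
    · intro hy
      obtain ⟨k, -, hk⟩ := hy.exists_pow_eq'
      exact ⟨k % _, Nat.mod_lt _ (d_pos p x), by rw [pow_mod_apply]; exact hk⟩
    · rintro ⟨k, -, rfl⟩
      exact ⟨(k : ℤ), by rw [zpow_natCast]⟩
  rw [himg, Finset.card_image_of_injOn, Finset.card_range]
  intro a ha b hb hab
  exact Function.iterate_injOn_Iio_minimalPeriod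
    (Set.mem_Iio.2 (Finset.mem_range.1 (by exact_mod_cast ha)))
    (Set.mem_Iio.2 (Finset.mem_range.1 (by exact_mod_cast hb))) hab

lemma exists_pow_minOf (p : Perm (Fin n)) (x : Fin n) : ∃ k : ℕ, (p ^ k) (minOf p x) = x := by
  obtain ⟨k, -, hk⟩ := (sameCycle_minOf p x).symm.exists_pow_eq'
  exact ⟨k, hk⟩

noncomputable def expOf (p : Perm (Fin n)) (x : Fin n) : ℕ := Nat.find (exists_pow_minOf p x)

lemma expOf_spec (p : Perm (Fin n)) (x : Fin n) : (p ^ expOf p x) (minOf p x) = x := by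
  unfold expOf; exact Nat.find_spec (exists_pow_minOf p x)

lemma expOf_lt (p : Perm (Fin n)) (x : Fin n) :
    expOf p x < Function.minimalPeriod ⇑p (minOf p x) := by
  by_contra hlt
  push_neg at hlt
  have hpos := d_pos p (minOf p x)
  have h2 : (p ^ (expOf p x % Function.minimalPeriod ⇑p (minOf p x))) (minOf p x) = x := by
    rw [pow_mod_apply]; exact expOf_spec p x
  have := Nat.find_min (exists_pow_minOf p x) (m := expOf p x % Function.minimalPeriod (⇑p) (minOf p x))
    (lt_of_lt_of_le (Nat.mod_lt _ hpos) hlt)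
  exact this h2

lemma minOf_eq_of_pow {p : Perm (Fin n)} {m x : Fin n} (hm : m ∈ cycleMins p) {k : ℕ}
    (hx : (p ^ k) m = x) : minOf p x = m := by
  have hs : p.SameCycle m x := ⟨(k : ℤ), by rw [zpow_natCast]; exact hx⟩
  rw [minOf_eq_of_sameCycle hs.symm, minOf_eq_self hm]

lemma expOf_eq_of_pow {p : Perm (Fin n)} {m x : Fin n} (hm : m ∈ cycleMins p) {k : ℕ}
    (hk : k < Function.minimalPeriod ⇑p m) (hx : (p ^ k) m = x) : expOf p x = k := by
  have hmin : minOf p x = m := minOf_eq_of_pow hm hx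
  have hle : expOf p x ≤ k := by
    unfold expOf; exact Nat.find_le (by rw [hmin]; exact hx)
  have h1 : (p ^ expOf p x) m = (p ^ k) m := by rw [← hmin] at hx ⊢; rw [expOf_spec, hx]
  exact Function.iterate_injOn_Iio_minimalPeriod
    (Set.mem_Iio.2 (lt_of_le_of_lt hle hk)) (Set.mem_Iio.2 hk) h1

noncomputable def tFun (p p' : Perm (Fin n)) (x : Fin n) : Fin n :=
  (p' ^ expOf p x) ((cycleMins p').getD ((cycleMins p).idxOf (minOf p x)) x)


variable {p p' : Perm (Fin n)}

lemma len_eq (h : orderedCycleType p = orderedCycleType p') :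
    (cycleMins p).length = (cycleMins p').length := by
  have := congrArg List.length h
  simpa [orderedCycleType_eq, List.length_map] using this

lemma period_eq (h : orderedCycleType p = orderedCycleType p') {i : ℕ}
    (hi : i < (cycleMins p).length) (hi' : i < (cycleMins p').length) :
    Function.minimalPeriod ⇑p' ((cycleMins p')[i])
      = Function.minimalPeriod ⇑p ((cycleMins p)[i]) := by
  have h1 := congrArg (fun l => l.getD i 0) h
  simp only [orderedCycleType_eq] at h1
  rw [List.getD_eq_getElem _ _ (by simpa using hi),
      List.getD_eq_getElem _ _ (by simpa using hi')] at h1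
  simp only [List.getElem_map] at h1
  rw [← card_cyc, ← card_cyc, h1]

lemma tFun_full (h : orderedCycleType p = orderedCycleType p') (x : Fin n) :
    ∃ (i : ℕ) (hi : i < (cycleMins p).length) (hi' : i < (cycleMins p').length),
      (cycleMins p)[i] = minOf p x ∧
      tFun p p' x = (p' ^ expOf p x) ((cycleMins p')[i]) ∧
      minOf p' (tFun p p' x) = (cycleMins p')[i] ∧
      expOf p' (tFun p p' x) = expOf p x := by
  have hmem : minOf p x ∈ cycleMins p := minOf_mem_cycleMins p x
  have hi : (cycleMins p).idxOf (minOf p x) < (cycleMins p).length :=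
    List.idxOf_lt_length_iff.2 hmem
  have hi' : (cycleMins p).idxOf (minOf p x) < (cycleMins p').length := len_eq h ▸ hi
  have hLi : (cycleMins p)[(cycleMins p).idxOf (minOf p x)] = minOf p x :=
    List.getElem_idxOf hi
  have hmem' : (cycleMins p')[(cycleMins p).idxOf (minOf p x)] ∈ cycleMins p' :=
    List.getElem_mem _
  have hval : tFun p p' x
      = (p' ^ expOf p x) ((cycleMins p')[(cycleMins p).idxOf (minOf p x)]) := by
    rw [tFun, List.getD_eq_getElem _ _ hi']
  have hper : Function.minimalPeriod ⇑p' ((cycleMins p')[(cycleMins p).idxOf (minOf p x)])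
      = Function.minimalPeriod ⇑p (minOf p x) := by
    have := period_eq h hi hi'
    rwa [hLi] at this
  have hk : expOf p x
      < Function.minimalPeriod ⇑p' ((cycleMins p')[(cycleMins p).idxOf (minOf p x)]) := by
    rw [hper]; exact expOf_lt p x
  refine ⟨_, hi, hi', hLi, hval, ?_, ?_⟩
  · rw [hval]; exact minOf_eq_of_pow hmem' rfl
  · rw [hval]; exact expOf_eq_of_pow hmem' hk rfl

lemma tFun_leftInv (h : orderedCycleType p = orderedCycleType p') (x : Fin n) :
    tFun p' p (tFun p p' x) = x := by
  obtain ⟨i, hi, hi', hLi, hval, hmin, hexp⟩ := tFun_full h x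
  rw [tFun, hexp, hmin, (nodup_cycleMins p').idxOf_getElem i hi',
      List.getD_eq_getElem _ _ hi, hLi]
  exact expOf_spec p x

lemma tFun_conj (h : orderedCycleType p = orderedCycleType p') (x : Fin n) :
    tFun p p' (p x) = p' (tFun p p' x) := by
  have hmem : minOf p x ∈ cycleMins p := minOf_mem_cycleMins p x
  have hmm : minOf p (p x) = minOf p x :=
    (minOf_eq_of_sameCycle (⟨1, by simp⟩ : p.SameCycle x (p x))).symm
  have hi : (cycleMins p).idxOf (minOf p x) < (cycleMins p).length :=
    List.idxOf_lt_length_iff.2 hmem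
  have hi' : (cycleMins p).idxOf (minOf p x) < (cycleMins p').length := len_eq h ▸ hi
  have hLi : (cycleMins p)[(cycleMins p).idxOf (minOf p x)] = minOf p x :=
    List.getElem_idxOf hi
  have hper : Function.minimalPeriod ⇑p' ((cycleMins p')[(cycleMins p).idxOf (minOf p x)])
      = Function.minimalPeriod ⇑p (minOf p x) := by
    have := period_eq h hi hi'
    rwa [hLi] at this
  have hspec1 : (p ^ expOf p (p x)) (minOf p x) = p x := by
    have := expOf_spec p (p x); rwa [hmm] at this
  have hspec2 : (p ^ (expOf p x + 1)) (minOf p x) = p x := by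
    rw [pow_succ', Equiv.Perm.mul_apply, expOf_spec]
  have hmod : expOf p (p x) ≡ expOf p x + 1 [MOD Function.minimalPeriod ⇑p (minOf p x)] :=
    modEq_of_pow_apply_eq (by rw [hspec1, hspec2])
  rw [tFun, tFun, hmm, List.getD_eq_getElem _ _ hi', List.getD_eq_getElem _ _ hi',
      pow_apply_eq_of_modEq (a := expOf p (p x)) (b := expOf p x + 1) (hper ▸ hmod),
      pow_succ', Equiv.Perm.mul_apply]

lemma tFun_map (h : orderedCycleType p = orderedCycleType p') {i : ℕ}
    (hi : i < (cycleMins p).length) (hi' : i < (cycleMins p').length) :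
    tFun p p' ((cycleMins p)[i]) = (cycleMins p')[i] := by
  have hmem : (cycleMins p)[i] ∈ cycleMins p := List.getElem_mem _
  have hmin : minOf p ((cycleMins p)[i]) = (cycleMins p)[i] := minOf_eq_self hmem
  have hidx : (cycleMins p).idxOf ((cycleMins p)[i]) = i :=
    (nodup_cycleMins p).idxOf_getElem i hi
  have hexp : expOf p ((cycleMins p)[i]) = 0 :=
    expOf_eq_of_pow hmem (d_pos p _) (by simp)
  rw [tFun, hmin, hidx, hexp, List.getD_eq_getElem _ _ hi', pow_zero]
  simp

end StmtAux

theorem stmt10 (n : ℕ) (p p' : Equiv.Perm (Fin n))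
    (h : orderedCycleType p = orderedCycleType p') :
    ∃! u : Equiv.Perm (Fin n), u * p * u⁻¹ = p' ∧ (cycleMins p).map u = cycleMins p' := by
  classical
  set u : Equiv.Perm (Fin n) :=
    ⟨StmtAux.tFun p p', StmtAux.tFun p' p, StmtAux.tFun_leftInv h, StmtAux.tFun_leftInv h.symm⟩
  have hcu : ∀ x, u x = StmtAux.tFun p p' x := fun x => rfl
  have hconj : u * p = p' * u := Equiv.ext fun x => StmtAux.tFun_conj h x
  have hmapu : (cycleMins p).map u = cycleMins p' := by
    apply List.ext_getElem
    · rw [List.length_map]; exact StmtAux.len_eq h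
    · intro i h1 h2
      rw [List.getElem_map, hcu]
      exact StmtAux.tFun_map h (by simpa using h1) h2
  refine ⟨u, ⟨?_, hmapu⟩, ?_⟩
  · rw [hconj, mul_inv_cancel_right]
  · rintro u' ⟨hc, hmap'⟩
    apply Equiv.ext
    intro x
    have hmem : StmtAux.minOf p x ∈ cycleMins p := StmtAux.minOf_mem_cycleMins p x
    have hi : (cycleMins p).idxOf (StmtAux.minOf p x) < (cycleMins p).length :=
      List.idxOf_lt_length_iff.2 hmem
    have hi' : (cycleMins p).idxOf (StmtAux.minOf p x) < (cycleMins p').length :=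
      StmtAux.len_eq h ▸ hi
    have hLi : (cycleMins p)[(cycleMins p).idxOf (StmtAux.minOf p x)] = StmtAux.minOf p x :=
      List.getElem_idxOf hi
    have hx : (p ^ StmtAux.expOf p x) (StmtAux.minOf p x) = x := StmtAux.expOf_spec p x
    have hcp : u' * p ^ StmtAux.expOf p x = p' ^ StmtAux.expOf p x * u' := by
      have h1 : u' * p ^ StmtAux.expOf p x * u'⁻¹ = p' ^ StmtAux.expOf p x := by
        rw [← hc, conj_pow]
      rw [← h1]; group
    have hmapi : u' ((cycleMins p)[(cycleMins p).idxOf (StmtAux.minOf p x)])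
        = (cycleMins p')[(cycleMins p).idxOf (StmtAux.minOf p x)] := by
      have h2 : (List.map (⇑u') (cycleMins p)).getD ((cycleMins p).idxOf (StmtAux.minOf p x)) x
          = (cycleMins p').getD ((cycleMins p).idxOf (StmtAux.minOf p x)) x := by rw [hmap']
      rwa [List.getD_eq_getElem _ _ (by simpa using hi), List.getD_eq_getElem _ _ hi',
        List.getElem_map] at h2
    have hval : u x = (p' ^ StmtAux.expOf p x)
        ((cycleMins p')[(cycleMins p).idxOf (StmtAux.minOf p x)]) := by
      rw [hcu, StmtAux.tFun, List.getD_eq_getElem _ _ hi']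
    calc u' x = u' ((p ^ StmtAux.expOf p x) (StmtAux.minOf p x)) := by rw [hx]
      _ = (u' * p ^ StmtAux.expOf p x) (StmtAux.minOf p x) := rfl
      _ = (p' ^ StmtAux.expOf p x * u') (StmtAux.minOf p x) := by rw [hcp]
      _ = (p' ^ StmtAux.expOf p x) (u' (StmtAux.minOf p x)) := rfl
      _ = (p' ^ StmtAux.expOf p x)
            ((cycleMins p')[(cycleMins p).idxOf (StmtAux.minOf p x)]) := by
            conv_lhs => rw [← hLi]
            rw [hmapi]
      _ = u x := hval.symm
end

section
/- Let a,b in S(n) with a^{-1}b of ordered cycle type mu, let c be in Cr(mu), and set x = phi_c(a,b) := a u c u^{-1} and y = phi_{c^∨}(a,b) := a u c^∨ u^{-1}, where u = u_{a^{-1}b} and c^∨ = c^{-1} p_mu. Then x^{-1} y has the same ordered cycle type and the same sequence of cycle minima as a^{-1}b. -/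
open Equiv

namespace Stmt12Aux

open Equiv Equiv.Perm Finset

variable {n : ℕ}

lemma sc_of_pow {p : Perm (Fin n)} {k : ℕ} {x y : Fin n} (h : (p ^ k) x = y) :
    p.SameCycle x y := ⟨(k : ℤ), by rwa [zpow_natCast]⟩

lemma sc_exists_pow {p : Perm (Fin n)} {x y : Fin n} (h : p.SameCycle x y) :
    ∃ k : ℕ, (p ^ k) x = y := by
  obtain ⟨k, _, hk⟩ := h.exists_pow_eq'
  exact ⟨k, hk⟩

lemma pow_mem_invariant {p : Perm (Fin n)} {S : Set (Fin n)}
    (hS : ∀ x ∈ S, p x ∈ S) {x : Fin n} (hx : x ∈ S) : ∀ k : ℕ, (p ^ k) x ∈ S := by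
  intro k
  induction k with
  | zero => simpa using hx
  | succ m ih => rw [pow_succ', Perm.mul_apply]; exact hS _ ih

lemma sc_mem_invariant {p : Perm (Fin n)} {S : Set (Fin n)}
    (hS : ∀ x ∈ S, p x ∈ S) {x y : Fin n} (hx : x ∈ S) (h : p.SameCycle x y) : y ∈ S := by
  obtain ⟨k, hk⟩ := sc_exists_pow h
  exact hk ▸ pow_mem_invariant hS hx k

section Merge

variable {p : Perm (Fin n)} {i j : Fin n}

lemma ms_apply_of_ne (x : Fin n) (hxi : x ≠ i) (hxj : x ≠ j) :
    (p * Equiv.swap i j) x = p x := by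
  simp [Perm.mul_apply, swap_apply_of_ne_of_ne hxi hxj]

lemma ms_apply_i : (p * Equiv.swap i j) i = p j := by simp [Perm.mul_apply]

lemma ms_apply_j : (p * Equiv.swap i j) j = p i := by simp [Perm.mul_apply]

lemma pow_succ_apply (q : Perm (Fin n)) (m : ℕ) (x : Fin n) :
    (q ^ (m + 1)) x = q ((q ^ m) x) := by
  rw [pow_succ', Perm.mul_apply]

/-- walk from `i` through the orbit of `j` -/
lemma claimC (hij : i ≠ j) (h : ¬ p.SameCycle i j) :
    ∀ k : ℕ, (p * Equiv.swap i j).SameCycle i ((p ^ k) (p j)) := by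
  intro k
  induction k with
  | zero =>
    refine sc_of_pow (k := 1) ?_
    simp [ms_apply_i]
  | succ m ih =>
    set y := (p ^ m) (p j) with hy
    have hjy : p.SameCycle j y := by
      refine sc_of_pow (k := m + 1) ?_
      rw [pow_succ, Perm.mul_apply]
    have hyi : y ≠ i := by
      rintro rfl
      exact h hjy.symm
    rw [pow_succ_apply]
    by_cases hyj : y = j
    · refine sc_of_pow (k := 1) ?_
      simp only [pow_one]
      rw [← hy, hyj]
      exact ms_apply_i
    · exact ih.trans (sc_of_pow (k := 1) (by simp [ms_apply_of_ne y hyi hyj]; exact hy))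

lemma scij (hij : i ≠ j) (h : ¬ p.SameCycle i j) :
    (p * Equiv.swap i j).SameCycle i j := by
  have h1 : 1 ≤ orderOf p := orderOf_pos p
  have := claimC hij h (orderOf p - 1)
  have h2 : (p ^ (orderOf p - 1)) (p j) = j := by
    have hpow : p ^ orderOf p = p ^ (orderOf p - 1) * p := by
      rw [← pow_succ]
      congr 1
      omega
    have h3 := pow_orderOf_eq_one p
    rw [hpow] at h3
    calc (p ^ (orderOf p - 1)) (p j) = (p ^ (orderOf p - 1) * p) j := rfl
      _ = j := by rw [h3]; rfl
  rwa [h2] at this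

/-- walk from `i` through the orbit of `i` -/
lemma claimD (hij : i ≠ j) (h : ¬ p.SameCycle i j) :
    ∀ k : ℕ, (p * Equiv.swap i j).SameCycle i ((p ^ k) i) := by
  intro k
  induction k with
  | zero => simpa using Equiv.Perm.SameCycle.refl _ _
  | succ m ih =>
    set y := (p ^ m) i with hy
    have hiy : p.SameCycle i y := sc_of_pow rfl
    have hyj : y ≠ j := by
      rintro rfl
      exact h hiy
    rw [pow_succ_apply]
    by_cases hyi : y = i
    · rw [← hy, hyi, ← ms_apply_j]
      exact (scij hij h).trans (sc_of_pow (k := 1) rfl)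
    · exact ih.trans (sc_of_pow (k := 1) (by simp [ms_apply_of_ne y hyi hyj]; exact hy))

lemma key1 (hij : i ≠ j) (h : ¬ p.SameCycle i j) (z : Fin n)
    (hz : p.SameCycle i z ∨ p.SameCycle j z) :
    (p * Equiv.swap i j).SameCycle i z := by
  rcases hz with hz | hz
  · obtain ⟨k, hk⟩ := sc_exists_pow hz
    exact hk ▸ claimD hij h k
  · obtain ⟨k, hk⟩ := sc_exists_pow hz
    match k, hk with
    | 0, hk => simpa using hk ▸ scij hij h
    | (m+1), hk =>
      have : (p ^ (m+1)) j = (p ^ m) (p j) := by rw [pow_succ, Perm.mul_apply]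
      rw [← hk, this]
      exact claimC hij h m

lemma hUinv (hij : i ≠ j) :
    ∀ x ∈ {x | p.SameCycle i x ∨ p.SameCycle j x},
      (p * Equiv.swap i j) x ∈ {x | p.SameCycle i x ∨ p.SameCycle j x} := by
  intro x hx
  by_cases hxi : x = i
  · subst hxi
    rw [ms_apply_i]
    exact Or.inr (sameCycle_apply_right.2 (Equiv.Perm.SameCycle.refl _ _))
  by_cases hxj : x = j
  · subst hxj
    rw [ms_apply_j]
    exact Or.inl (sameCycle_apply_right.2 (Equiv.Perm.SameCycle.refl _ _))
  rw [ms_apply_of_ne x hxi hxj]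
  rcases hx with hx | hx
  · exact Or.inl (sameCycle_apply_right.2 hx)
  · exact Or.inr (sameCycle_apply_right.2 hx)

lemma outside (hij : i ≠ j) {x : Fin n}
    (hx : ¬ (p.SameCycle i x ∨ p.SameCycle j x)) :
    ∀ k : ℕ, ((p * Equiv.swap i j) ^ k) x = (p ^ k) x ∧
      ¬ (p.SameCycle i ((p ^ k) x) ∨ p.SameCycle j ((p ^ k) x)) := by
  intro k
  induction k with
  | zero => simpa using hx
  | succ m ih =>
    obtain ⟨ih1, ih2⟩ := ih
    have hne_i : (p ^ m) x ≠ i := by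
      rintro hh
      exact ih2 (Or.inl (by rw [hh]))
    have hne_j : (p ^ m) x ≠ j := by
      rintro hh
      exact ih2 (Or.inr (by rw [hh]))
    constructor
    · rw [pow_succ_apply, pow_succ_apply, ih1, ms_apply_of_ne _ hne_i hne_j]
    · rw [pow_succ_apply]
      intro hcon
      rcases hcon with hc | hc
      · exact ih2 (Or.inl (sameCycle_apply_right.1 hc))
      · exact ih2 (Or.inr (sameCycle_apply_right.1 hc))

/-- The merge lemma: multiplying by a transposition joining two distinct cycles. -/
lemma sameCycle_mul_swap_of_not (hij : i ≠ j) (h : ¬ p.SameCycle i j) (x y : Fin n) :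
    (p * Equiv.swap i j).SameCycle x y ↔
      p.SameCycle x y ∨ (p.SameCycle x i ∧ p.SameCycle y j) ∨
        (p.SameCycle x j ∧ p.SameCycle y i) := by
  constructor
  · intro hxy
    by_cases hx : p.SameCycle i x ∨ p.SameCycle j x
    · have hy : p.SameCycle i y ∨ p.SameCycle j y :=
        sc_mem_invariant (hUinv hij) hx hxy
      rcases hx with hx | hx <;> rcases hy with hy | hy
      · exact Or.inl (hx.symm.trans hy)
      · exact Or.inr (Or.inl ⟨hx.symm, hy.symm⟩)
      · exact Or.inr (Or.inr ⟨hx.symm, hy.symm⟩)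
      · exact Or.inl (hx.symm.trans hy)
    · obtain ⟨k, hk⟩ := sc_exists_pow hxy
      have := (outside hij hx k).1
      exact Or.inl (sc_of_pow (by rw [← this, hk]))
  · rintro (hp | ⟨hxi, hyj⟩ | ⟨hxj, hyi⟩)
    · by_cases hx : p.SameCycle i x ∨ p.SameCycle j x
      · have hy : p.SameCycle i y ∨ p.SameCycle j y := by
          rcases hx with hx | hx
          · exact Or.inl (hx.trans hp)
          · exact Or.inr (hx.trans hp)
        exact (key1 hij h x hx).symm.trans (key1 hij h y hy)
      · obtain ⟨k, hk⟩ := sc_exists_pow hp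
        have := (outside hij hx k).1
        exact sc_of_pow (by rw [this, hk])
    · exact (key1 hij h x (Or.inl hxi.symm)).symm.trans (key1 hij h y (Or.inr hyj.symm))
    · exact (key1 hij h x (Or.inr hxj.symm)).symm.trans (key1 hij h y (Or.inl hyi.symm))

end Merge


section Split

variable {p : Perm (Fin n)} {i j : Fin n}

/-- The split lemma: if `i ~ j` under `p`, they are in different cycles of `p * swap i j`. -/
lemma not_sameCycle_mul_swap (hij : i ≠ j) (h : p.SameCycle i j) :
    ¬ (p * Equiv.swap i j).SameCycle i j := by
  classical
  obtain ⟨k₀, hk₀⟩ := sc_exists_pow h.symm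
  have hk₀0 : k₀ ≠ 0 := by
    rintro rfl
    have hji : j = i := by simpa using hk₀
    exact hij hji.symm
  have hQ : ∃ m, (p ^ (m + 1)) j = i := ⟨k₀ - 1, by rwa [Nat.sub_add_cancel (Nat.one_le_iff_ne_zero.2 hk₀0)]⟩
  set r := Nat.find hQ + 1 with hrdef
  have hr : (p ^ r) j = i := Nat.find_spec hQ
  have hrmin : ∀ m, 1 ≤ m → m < r → (p ^ m) j ≠ i := by
    intro m h1 h2 hcon
    have := Nat.find_min hQ (m := m - 1) (by omega)
    rw [Nat.sub_add_cancel h1] at this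
    exact this hcon
  set S : Set (Fin n) := {x | ∃ m, 1 ≤ m ∧ m ≤ r ∧ (p ^ m) j = x} with hSdef
  have hjS : j ∉ S := by
    rintro ⟨m, h1, h2, h3⟩
    have hsplit : (p ^ (r - m)) ((p ^ m) j) = (p ^ r) j := by
      rw [← Perm.mul_apply, ← pow_add]
      congr 2
      omega
    rw [h3, hr] at hsplit
    by_cases hm : m = r
    · subst hm
      simp at hsplit
      exact hij hsplit.symm
    · exact hrmin (r - m) (by omega) (by omega) hsplit
  have hiS : i ∈ S := ⟨r, by omega, le_refl r, hr⟩
  have hSinv : ∀ x ∈ S, (p * Equiv.swap i j) x ∈ S := by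
    rintro x ⟨m, h1, h2, h3⟩
    by_cases hxi : x = i
    · subst hxi
      rw [ms_apply_i]
      exact ⟨1, le_refl 1, by omega, by simp⟩
    · have hxj : x ≠ j := fun hh => hjS (hh ▸ ⟨m, h1, h2, h3⟩)
      rw [ms_apply_of_ne x hxi hxj]
      have hmr : m ≠ r := by
        rintro rfl
        exact hxi (by rw [← h3, hr])
      exact ⟨m + 1, by omega, by omega, by rw [pow_succ_apply, h3]⟩
  intro hcon
  exact hjS (sc_mem_invariant hSinv hiS hcon)

end Split


section Count

noncomputable def ccSet (p : Perm (Fin n)) : Finset (Fin n) :=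
  @Finset.filter _ (fun i => ∀ j, p.SameCycle i j → i ≤ j) (Classical.decPred _) Finset.univ

lemma cycleCount_eq (p : Perm (Fin n)) : cycleCount p = (ccSet p).card :=
  Finset.length_sort _

lemma mem_ccSet {p : Perm (Fin n)} {x : Fin n} :
    x ∈ ccSet p ↔ ∀ y, p.SameCycle x y → x ≤ y := by
  constructor
  · intro hx
    exact ((@Finset.mem_filter _ _ (Classical.decPred _) _ _).1 hx).2
  · intro hx
    exact (@Finset.mem_filter _ _ (Classical.decPred _) _ _).2 ⟨Finset.mem_univ x, hx⟩

lemma ccSet_card_le (p : Perm (Fin n)) : (ccSet p).card ≤ n := by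
  calc (ccSet p).card ≤ (Finset.univ : Finset (Fin n)).card := Finset.card_le_univ _
    _ = n := by simp

lemma cycleCount_le (p : Perm (Fin n)) : cycleCount p ≤ n := by
  rw [cycleCount_eq]; exact ccSet_card_le p

lemma cycleCount_one : cycleCount (1 : Perm (Fin n)) = n := by
  rw [cycleCount_eq]
  have : ccSet (1 : Perm (Fin n)) = Finset.univ := by
    ext x
    simp only [Finset.mem_univ, iff_true, mem_ccSet]
    intro y hy
    rw [sameCycle_one] at hy
    exact le_of_eq hy
  rw [this]; simp

lemma eq_one_of_cycleCount {p : Perm (Fin n)} (h : cycleCount p = n) : p = 1 := by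
  rw [cycleCount_eq] at h
  have huniv : ccSet p = Finset.univ := Finset.eq_univ_of_card _ (by simp [h])
  have hmem : ∀ x : Fin n, ∀ y, p.SameCycle x y → x ≤ y := by
    intro x
    exact mem_ccSet.1 (huniv ▸ Finset.mem_univ x)
  ext x
  have h1 : x ≤ p x := hmem x (p x) (sameCycle_apply_right.2 (Equiv.Perm.SameCycle.refl _ _))
  have h2 : p x ≤ x := hmem (p x) x (sameCycle_apply_right.2 (Equiv.Perm.SameCycle.refl _ _)).symm
  have := le_antisymm h2 h1
  simp [this]

variable {p : Perm (Fin n)} {i j : Fin n}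

lemma cycleCount_mul_swap_of_not (hij : i ≠ j) (h : ¬ p.SameCycle i j) :
    cycleCount (p * Equiv.swap i j) + 1 = cycleCount p := by
  classical
  set U : Finset (Fin n) :=
    Finset.univ.filter (fun x => p.SameCycle i x ∨ p.SameCycle j x) with hU
  have memU : ∀ x, x ∈ U ↔ (p.SameCycle i x ∨ p.SameCycle j x) := by
    intro x; simp [hU]
  have hiU : i ∈ U := (memU i).2 (Or.inl (Equiv.Perm.SameCycle.refl _ _))
  have hjU : j ∈ U := (memU j).2 (Or.inr (Equiv.Perm.SameCycle.refl _ _))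
  have hUne : U.Nonempty := ⟨i, hiU⟩
  set M := U.min' hUne with hM
  have hMU : M ∈ U := U.min'_mem hUne
  -- orbit finsets of i and j
  set Oi : Finset (Fin n) := Finset.univ.filter (fun x => p.SameCycle i x) with hOi
  set Oj : Finset (Fin n) := Finset.univ.filter (fun x => p.SameCycle j x) with hOj
  have memOi : ∀ x, x ∈ Oi ↔ p.SameCycle i x := by intro x; simp [hOi]
  have memOj : ∀ x, x ∈ Oj ↔ p.SameCycle j x := by intro x; simp [hOj]
  have hOine : Oi.Nonempty := ⟨i, (memOi i).2 (Equiv.Perm.SameCycle.refl _ _)⟩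
  have hOjne : Oj.Nonempty := ⟨j, (memOj j).2 (Equiv.Perm.SameCycle.refl _ _)⟩
  set Mi := Oi.min' hOine with hMi
  set Mj := Oj.min' hOjne with hMj
  have hMisc : p.SameCycle i Mi := (memOi Mi).1 (Oi.min'_mem hOine)
  have hMjsc : p.SameCycle j Mj := (memOj Mj).1 (Oj.min'_mem hOjne)
  have hMiMj : Mi ≠ Mj := by
    rintro hh
    exact h (hMisc.trans (hh ▸ hMjsc).symm)
  have hMiU : Mi ∈ U := (memU Mi).2 (Or.inl hMisc)
  have hMjU : Mj ∈ U := (memU Mj).2 (Or.inr hMjsc)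
  -- same-cycle characterization inside U
  have A : ∀ x ∈ U, ∀ y, (p * Equiv.swap i j).SameCycle x y ↔ y ∈ U := by
    intro x hx y
    rw [sameCycle_mul_swap_of_not hij h, memU]
    rcases (memU x).1 hx with hxi | hxj
    · constructor
      · rintro (hxy | ⟨_, h2⟩ | ⟨_, h2⟩)
        · exact Or.inl (hxi.trans hxy)
        · exact Or.inr h2.symm
        · exact Or.inl h2.symm
      · rintro (hyi | hyj)
        · exact Or.inl (hxi.symm.trans hyi)
        · exact Or.inr (Or.inl ⟨hxi.symm, hyj.symm⟩)
    · constructor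
      · rintro (hxy | ⟨_, h2⟩ | ⟨_, h2⟩)
        · exact Or.inr (hxj.trans hxy)
        · exact Or.inr h2.symm
        · exact Or.inl h2.symm
      · rintro (hyi | hyj)
        · exact Or.inr (Or.inr ⟨hxj.symm, hyi.symm⟩)
        · exact Or.inl (hxj.symm.trans hyj)
  have B : ∀ x, x ∉ U → ∀ y, (p * Equiv.swap i j).SameCycle x y ↔ p.SameCycle x y := by
    intro x hx y
    rw [sameCycle_mul_swap_of_not hij h]
    constructor
    · rintro (hxy | ⟨h1, _⟩ | ⟨h1, _⟩)
      · exact hxy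
      · exact absurd ((memU x).2 (Or.inl h1.symm)) hx
      · exact absurd ((memU x).2 (Or.inr h1.symm)) hx
    · exact Or.inl
  have hccS : ccSet (p * Equiv.swap i j) = (ccSet p \ U) ∪ {M} := by
    ext x
    simp only [Finset.mem_union, Finset.mem_sdiff, Finset.mem_singleton, mem_ccSet]
    by_cases hx : x ∈ U
    · constructor
      · intro hcc
        right
        have hle : ∀ y ∈ U, x ≤ y := fun y hy => hcc y ((A x hx y).2 hy)
        exact le_antisymm (hle M hMU) (U.min'_le x hx)
      · rintro (⟨_, hnU⟩ | hxM)
        · exact absurd hx hnU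
        · intro y hy
          exact le_of_eq_of_le hxM (U.min'_le y ((A x hx y).1 hy))
    · constructor
      · intro hcc
        left
        exact ⟨fun y hy => hcc y ((B x hx y).2 hy), hx⟩
      · rintro (⟨hccp, _⟩ | hxM)
        · intro y hy; exact hccp y ((B x hx y).1 hy)
        · exact absurd (by rw [hxM]; exact hMU) hx
  have hccP : ccSet p = (ccSet p \ U) ∪ {Mi, Mj} := by
    ext x
    simp only [Finset.mem_union, Finset.mem_sdiff, Finset.mem_insert,
      Finset.mem_singleton, mem_ccSet]
    by_cases hx : x ∈ U
    · rcases (memU x).1 hx with hxi | hxj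
      · constructor
        · intro hcc
          right; left
          have hxOi : x ∈ Oi := (memOi x).2 hxi
          have hle : ∀ y ∈ Oi, x ≤ y := fun y hy => hcc y (hxi.symm.trans ((memOi y).1 hy))
          exact le_antisymm (hle Mi (Oi.min'_mem hOine)) (Oi.min'_le x hxOi)
        · rintro (⟨_, hnU⟩ | hxM | hxM)
          · exact absurd hx hnU
          · intro y hy
            rw [hxM] at hy ⊢
            exact Oi.min'_le y ((memOi y).2 (hMisc.trans hy))
          · exact absurd ((hxM ▸ hxi).trans hMjsc.symm) h
      · constructor
        · intro hcc
          right; right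
          have hxOj : x ∈ Oj := (memOj x).2 hxj
          have hle : ∀ y ∈ Oj, x ≤ y := fun y hy => hcc y (hxj.symm.trans ((memOj y).1 hy))
          exact le_antisymm (hle Mj (Oj.min'_mem hOjne)) (Oj.min'_le x hxOj)
        · rintro (⟨_, hnU⟩ | hxM | hxM)
          · exact absurd hx hnU
          · exact absurd ((hxM ▸ hxj).trans hMisc.symm) (fun hh => h hh.symm)
          · intro y hy
            rw [hxM] at hy ⊢
            exact Oj.min'_le y ((memOj y).2 (hMjsc.trans hy))
    · constructor
      · intro hcc
        exact Or.inl ⟨hcc, hx⟩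
      · rintro (⟨hcc, _⟩ | hxM | hxM)
        · exact hcc
        · exact absurd (by rw [hxM]; exact hMiU) hx
        · exact absurd (by rw [hxM]; exact hMjU) hx
  have hd1 : Disjoint (ccSet p \ U) ({M} : Finset (Fin n)) := by
    rw [Finset.disjoint_singleton_right, Finset.mem_sdiff]
    rintro ⟨_, hnU⟩
    exact hnU hMU
  have hd2 : Disjoint (ccSet p \ U) ({Mi, Mj} : Finset (Fin n)) := by
    rw [Finset.disjoint_right]
    intro x hx
    rw [Finset.mem_insert, Finset.mem_singleton] at hx
    rw [Finset.mem_sdiff]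
    rintro ⟨_, hnU⟩
    rcases hx with rfl | rfl
    · exact hnU hMiU
    · exact hnU hMjU
  have c1 : (ccSet (p * Equiv.swap i j)).card = (ccSet p \ U).card + 1 := by
    rw [hccS, Finset.card_union_of_disjoint hd1, Finset.card_singleton]
  have c2 : (ccSet p).card = (ccSet p \ U).card + 2 := by
    conv_lhs => rw [hccP]
    rw [Finset.card_union_of_disjoint hd2, Finset.card_pair hMiMj]
  rw [cycleCount_eq, cycleCount_eq, c1, c2]

lemma cycleCount_mul_swap_of_sc (hij : i ≠ j) (h : p.SameCycle i j) :
    cycleCount (p * Equiv.swap i j) = cycleCount p + 1 := by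
  have h2 := not_sameCycle_mul_swap hij h
  have h3 := cycleCount_mul_swap_of_not hij h2
  rw [mul_assoc, swap_mul_self, mul_one] at h3
  omega

end Count


section Length

lemma exists_swap_list : ∀ (k : ℕ) (σ : Perm (Fin n)), n - cycleCount σ = k →
    ∃ l : List (Perm (Fin n)), (∀ t ∈ l, t.IsSwap) ∧ l.prod = σ ∧ l.length = k := by
  intro k
  induction k using Nat.strong_induction_on with
  | _ k IH =>
    intro σ hk
    by_cases hσ : σ = 1
    · subst hσ
      refine ⟨[], by simp, by simp, ?_⟩
      rw [cycleCount_one] at hk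
      simp only [List.length_nil]
      omega
    · have hne : ∃ i, σ i ≠ i := by
        by_contra hcon
        push_neg at hcon
        exact hσ (Equiv.ext hcon)
      obtain ⟨i, hi⟩ := hne
      have hij : i ≠ σ i := fun hh => hi hh.symm
      have hsc : σ.SameCycle i (σ i) :=
        sameCycle_apply_right.2 (Equiv.Perm.SameCycle.refl _ _)
      have hcct : cycleCount (σ * Equiv.swap i (σ i)) = cycleCount σ + 1 :=
        cycleCount_mul_swap_of_sc hij hsc
      have hle : cycleCount (σ * Equiv.swap i (σ i)) ≤ n := cycleCount_le _
      have hlt : n - cycleCount (σ * Equiv.swap i (σ i)) < k := by omega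
      obtain ⟨l, hl1, hl2, hl3⟩ := IH _ hlt (σ * Equiv.swap i (σ i)) rfl
      refine ⟨l ++ [Equiv.swap i (σ i)], ?_, ?_, ?_⟩
      · intro t ht
        rcases List.mem_append.1 ht with ht | ht
        · exact hl1 t ht
        · rw [List.mem_singleton] at ht
          exact ht ▸ ⟨i, σ i, hij, rfl⟩
      · rw [List.prod_append, List.prod_singleton, hl2, mul_assoc, swap_mul_self, mul_one]
      · rw [List.length_append, List.length_singleton, hl3]
        omega

lemma cc_prod_bound : ∀ l : List (Perm (Fin n)), (∀ t ∈ l, t.IsSwap) →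
    n ≤ cycleCount l.prod + l.length := by
  intro l
  induction l using List.reverseRecOn with
  | nil =>
    intro _
    rw [List.prod_nil, cycleCount_one]
    simp
  | append_singleton l t IH =>
    intro hsw
    have hl : ∀ s ∈ l, Equiv.Perm.IsSwap s := fun s hs => hsw s (List.mem_append.2 (Or.inl hs))
    have ht : t.IsSwap := hsw t (List.mem_append.2 (Or.inr (List.mem_singleton.2 rfl)))
    obtain ⟨x, y, hxy, rfl⟩ := ht
    have hIH := IH hl
    rw [List.prod_append, List.prod_singleton, List.length_append, List.length_singleton]
    by_cases hsc : l.prod.SameCycle x y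
    · have := cycleCount_mul_swap_of_sc hxy hsc
      omega
    · have := cycleCount_mul_swap_of_not hxy hsc
      omega

lemma sInf_swapset (τ : Perm (Fin n)) :
    sInf {k | ∃ l : List (Perm (Fin n)), l.length = k ∧ (∀ t ∈ l, t.IsSwap) ∧ l.prod = τ} =
      n - cycleCount τ := by
  have hmem : (n - cycleCount τ) ∈
      {k | ∃ l : List (Perm (Fin n)), l.length = k ∧ (∀ t ∈ l, t.IsSwap) ∧ l.prod = τ} := by
    obtain ⟨l, h1, h2, h3⟩ := exists_swap_list (n - cycleCount τ) τ rfl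
    exact ⟨l, h3, h1, h2⟩
  refine le_antisymm (Nat.sInf_le hmem) (le_csInf ⟨_, hmem⟩ ?_)
  rintro k ⟨l, rfl, hsw, hprod⟩
  have := cc_prod_bound l hsw
  rw [hprod] at this
  have := cycleCount_le τ
  omega

lemma tri (a b : Perm (Fin n)) :
    cycleCount a + cycleCount b ≤ n + cycleCount (a * b) := by
  obtain ⟨la, ha1, ha2, ha3⟩ := exists_swap_list (n - cycleCount a) a rfl
  obtain ⟨lb, hb1, hb2, hb3⟩ := exists_swap_list (n - cycleCount b) b rfl
  have hbound := cc_prod_bound (la ++ lb) (by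
    intro t ht
    rcases List.mem_append.1 ht with ht | ht
    · exact ha1 t ht
    · exact hb1 t ht)
  rw [List.prod_append, ha2, hb2, List.length_append, ha3, hb3] at hbound
  have h1 := cycleCount_le a
  have h2 := cycleCount_le b
  omega

end Length

section Main

lemma key_main : ∀ (k : ℕ) (c d : Perm (Fin n)), n - cycleCount d = k →
    cycleCount c + cycleCount d = n + cycleCount (c * d) →
    ∀ x y, (c⁻¹ * d).SameCycle x y ↔ (c * d).SameCycle x y := by
  intro k
  induction k using Nat.strong_induction_on with
  | _ k IH =>
    intro c d hk hgeo x y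
    by_cases hd : d = 1
    · subst hd
      simp only [mul_one]
      exact sameCycle_inv
    · have hne : ∃ i, d i ≠ i := by
        by_contra hcon
        push_neg at hcon
        exact hd (Equiv.ext hcon)
      obtain ⟨i, hi⟩ := hne
      have hij : i ≠ d i := fun hh => hi hh.symm
      have hscd : d.SameCycle i (d i) :=
        sameCycle_apply_right.2 (Equiv.Perm.SameCycle.refl _ _)
      have hccd₂ : cycleCount (d * Equiv.swap i (d i)) = cycleCount d + 1 :=
        cycleCount_mul_swap_of_sc hij hscd
      have hdt : d = (d * Equiv.swap i (d i)) * Equiv.swap i (d i) := by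
        rw [mul_assoc, swap_mul_self, mul_one]
      have hcd₂ : c * (d * Equiv.swap i (d i)) = (c * d) * Equiv.swap i (d i) := by
        rw [mul_assoc]
      by_cases hscP : (c * d).SameCycle i (d i)
      · have hsplitP := not_sameCycle_mul_swap hij hscP
        have hccPt := cycleCount_mul_swap_of_sc hij hscP
        have hgeo₂ : cycleCount c + cycleCount (d * Equiv.swap i (d i)) =
            n + cycleCount (c * (d * Equiv.swap i (d i))) := by
          rw [hcd₂]
          omega
        have hccd₂le := cycleCount_le (d * Equiv.swap i (d i))
        have hk₂ : n - cycleCount (d * Equiv.swap i (d i)) < k := by omega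
        have IH₂ := IH _ hk₂ c (d * Equiv.swap i (d i)) rfl hgeo₂
        have hnot₂ : ¬ (c * (d * Equiv.swap i (d i))).SameCycle i (d i) := by
          rw [hcd₂]
          exact hsplitP
        have hnot₁ : ¬ (c⁻¹ * (d * Equiv.swap i (d i))).SameCycle i (d i) :=
          fun hh => hnot₂ ((IH₂ i (d i)).1 hh)
        have e1 : c⁻¹ * d = (c⁻¹ * (d * Equiv.swap i (d i))) * Equiv.swap i (d i) := by
          rw [mul_assoc, mul_assoc, swap_mul_self, mul_one]
        have e2 : c * d = (c * (d * Equiv.swap i (d i))) * Equiv.swap i (d i) := by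
          rw [mul_assoc, mul_assoc, swap_mul_self, mul_one]
        rw [e1, e2, sameCycle_mul_swap_of_not hij hnot₁ x y,
          sameCycle_mul_swap_of_not hij hnot₂ x y]
        simp only [IH₂]
      · have hmerge := cycleCount_mul_swap_of_not hij hscP
        have htri := tri c (d * Equiv.swap i (d i))
        rw [hcd₂] at htri
        omega

end Main


section Final

lemma ccSet_congr {p q : Perm (Fin n)}
    (h : ∀ x y, p.SameCycle x y ↔ q.SameCycle x y) : ccSet p = ccSet q := by
  ext x
  rw [mem_ccSet, mem_ccSet]
  constructor
  · intro hx y hy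
    exact hx y ((h x y).2 hy)
  · intro hx y hy
    exact hx y ((h x y).1 hy)

lemma cycleMins_eq_sort (p : Perm (Fin n)) :
    cycleMins p = Finset.sort (ccSet p) (· ≤ ·) := rfl

lemma cycleMins_congr {p q : Perm (Fin n)}
    (h : ∀ x y, p.SameCycle x y ↔ q.SameCycle x y) : cycleMins p = cycleMins q := by
  rw [cycleMins_eq_sort, cycleMins_eq_sort, ccSet_congr h]

noncomputable def orbF (p : Perm (Fin n)) (i : Fin n) : Finset (Fin n) :=
  @Finset.filter _ (fun j => p.SameCycle i j) (Classical.decPred _) Finset.univ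

lemma mem_orbF {p : Perm (Fin n)} {i x : Fin n} : x ∈ orbF p i ↔ p.SameCycle i x := by
  constructor
  · intro hx
    exact ((@Finset.mem_filter _ _ (Classical.decPred _) _ _).1 hx).2
  · intro hx
    exact (@Finset.mem_filter _ _ (Classical.decPred _) _ _).2 ⟨Finset.mem_univ x, hx⟩

lemma orderedCycleType_eq_map (p : Perm (Fin n)) :
    orderedCycleType p = (cycleMins p).map (fun i => (orbF p i).card) := rfl

lemma orderedCycleType_congr {p q : Perm (Fin n)}
    (h : ∀ x y, p.SameCycle x y ↔ q.SameCycle x y) :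
    orderedCycleType p = orderedCycleType q := by
  rw [orderedCycleType_eq_map, orderedCycleType_eq_map]
  have hfun : (fun i => (orbF p i).card) = (fun i => (orbF q i).card) := by
    funext i
    congr 1
    ext x
    rw [mem_orbF, mem_orbF]
    exact h i x
  rw [hfun, cycleMins_congr h]

lemma trdist_eq (x y : Perm (Fin n)) : trdist x y = n - cycleCount (x⁻¹ * y) :=
  sInf_swapset _

end Final

end Stmt12Aux

theorem stmt12 (n : ℕ) (a b u c P : Equiv.Perm (Fin n))
    (hP : P = canonPerm n (orderedCycleType (a⁻¹ * b)) 0)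
    (hu : IsConjugator P (a⁻¹ * b) u) (hc : c ∈ midpts 1 P) :
    orderedCycleType ((a * u * c * u⁻¹)⁻¹ * (a * u * (c⁻¹ * P) * u⁻¹)) =
      orderedCycleType (a⁻¹ * b) ∧
    cycleMins ((a * u * c * u⁻¹)⁻¹ * (a * u * (c⁻¹ * P) * u⁻¹)) = cycleMins (a⁻¹ * b) := by
  obtain ⟨hu1, -⟩ := hu
  have hc1 := hc.1
  have e1 := Stmt12Aux.trdist_eq (1 : Equiv.Perm (Fin n)) c
  have e2 := Stmt12Aux.trdist_eq c P
  have e3 := Stmt12Aux.trdist_eq (1 : Equiv.Perm (Fin n)) P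
  rw [inv_one, one_mul] at e1 e3
  rw [e1, e2, e3] at hc1
  have b1 := Stmt12Aux.cycleCount_le c
  have b2 := Stmt12Aux.cycleCount_le (c⁻¹ * P)
  have b3 := Stmt12Aux.cycleCount_le P
  have hcc : cycleCount c + cycleCount (c⁻¹ * P) = n + cycleCount P := by omega
  have hmain := Stmt12Aux.key_main (n - cycleCount (c⁻¹ * P)) c (c⁻¹ * P) rfl
    (by rw [mul_inv_cancel_left]; exact hcc)
  have hexpr : (a * u * c * u⁻¹)⁻¹ * (a * u * (c⁻¹ * P) * u⁻¹) =
      u * (c⁻¹ * (c⁻¹ * P)) * u⁻¹ := by group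
  have hSC : ∀ x y, ((a * u * c * u⁻¹)⁻¹ * (a * u * (c⁻¹ * P) * u⁻¹)).SameCycle x y ↔
      (a⁻¹ * b).SameCycle x y := by
    intro x y
    rw [hexpr, Equiv.Perm.sameCycle_conj, hmain, mul_inv_cancel_left, ← hu1,
      Equiv.Perm.sameCycle_conj]
  exact ⟨Stmt12Aux.orderedCycleType_congr hSC, Stmt12Aux.cycleMins_congr hSC⟩
end
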